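/- arXiv:2207.14383 — 4 statements merged into one kernel-verified Lean document; each statement's English description precedes it below -/
import Mathlib

section
/- Let l ≥ 1 and let Φ : ℂ → ℂ^{l×l} be a matrix-valued function analytic on the open unit disk 𝔻 = {z : |z| < 1}, such that det Φ(0) = 0 and det Φ(z) ≠ 0 for every z ∈ 𝔻∖{0}. Then the following are equivalent: (1) Φ has a simple zero at z = 0, i.e., the function z ↦ z·Φ(z)^{−1}, defined on 𝔻∖{0}, has a finite limit as z → 0 (this limit is then automatically a nonzero matrix, so Φ^{−1} has a pole of order exactly one at 0); (2) for all vectors a, b ∈ ℂ^l, the relations Φ(0)·a = 0 and Φ(0)·b + Φ′(0)·a = 0 imply a = 0, where Φ′ denotes the complex derivative of Φ. -/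
open Metric Filter Topology Matrix

private lemma aux_det_analytic {l : ℕ} {M : ℂ → Matrix (Fin l) (Fin l) ℂ} {x : ℂ}
    (h : ∀ i j, AnalyticAt ℂ (fun z => M z i j) x) :
    AnalyticAt ℂ (fun z => (M z).det) x := by
  have e : (fun z => (M z).det) = fun z => ∑ σ : Equiv.Perm (Fin l),
      (Equiv.Perm.sign σ : ℂ) * ∏ i, M z (σ i) i := by
    funext z; rw [Matrix.det_apply']
  rw [e]
  exact Finset.analyticAt_fun_sum _ fun σ _ =>
    analyticAt_const.mul (Finset.analyticAt_fun_prod _ fun i _ => h (σ i) i)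

private lemma aux_adj_analytic {l : ℕ} {M : ℂ → Matrix (Fin l) (Fin l) ℂ} {x : ℂ}
    (h : ∀ i j, AnalyticAt ℂ (fun z => M z i j) x) (i j : Fin l) :
    AnalyticAt ℂ (fun z => (M z).adjugate i j) x := by
  simp_rw [Matrix.adjugate_apply]
  apply aux_det_analytic
  intro k j'
  by_cases hk : k = j
  · simpa [Matrix.updateRow_apply, hk] using analyticAt_const
  · simpa [Matrix.updateRow_apply, hk] using h k j'

private lemma aux_factor {f : ℂ → ℂ} (hf : AnalyticAt ℂ f 0) (n : ℕ)
    (hn : (n : ℕ∞) ≤ analyticOrderAt f 0) :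
    ∃ g : ℂ → ℂ, AnalyticAt ℂ g 0 ∧ ∀ᶠ z in 𝓝 (0:ℂ), f z = z ^ n * g z := by
  rcases eq_or_ne (analyticOrderAt f 0) ⊤ with h | h
  · refine ⟨0, analyticAt_const, ?_⟩
    filter_upwards [analyticOrderAt_eq_top.mp h] with z hz
    simp [hz]
  · obtain ⟨k, hk⟩ := WithTop.ne_top_iff_exists.mp h
    have hnk : n ≤ k := by
      have := hn.trans_eq hk.symm
      rw [ENat.some_eq_coe] at this
      exact Nat.cast_le.mp this
    obtain ⟨g, hg, hg0, hfg⟩ := (hf.analyticOrderAt_eq_natCast (n := k)).mp hk.symm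
    refine ⟨fun z => z ^ (k - n) * g z, (analyticAt_id.pow _).mul hg, ?_⟩
    filter_upwards [hfg] with z hz
    rw [hz, smul_eq_mul, sub_zero, ← mul_assoc, ← pow_add, Nat.add_sub_cancel' hnk]

/-- Newton–Jost lemma: a matrix-valued function `Φ`, analytic on the unit disk with
`det Φ(0) = 0` and `det Φ(z) ≠ 0` for `z ∈ 𝔻∖{0}`, has a simple zero at `0` (i.e. `z·Φ(z)⁻¹`
has a finite limit at `0`) if and only if the relations `Φ(0)a = 0`, `Φ(0)b + Φ′(0)a = 0`
imply `a = 0`. -/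
theorem newton_jost_simple_zero
    (l : ℕ) (hl : 1 ≤ l) (Φ : ℂ → Matrix (Fin l) (Fin l) ℂ)
    (hA : ∀ i j : Fin l, AnalyticOnNhd ℂ (fun z => Φ z i j) (Metric.ball (0 : ℂ) 1))
    (h0 : (Φ 0).det = 0)
    (hz : ∀ z ∈ Metric.ball (0 : ℂ) 1, z ≠ 0 → (Φ z).det ≠ 0) :
    ((∃ L : Matrix (Fin l) (Fin l) ℂ,
        Filter.Tendsto (fun z => z • (Φ z)⁻¹) (nhdsWithin 0 {(0 : ℂ)}ᶜ) (nhds L))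
      ↔ (∀ a b : Fin l → ℂ,
          Φ 0 *ᵥ a = 0 →
          (Φ 0 *ᵥ b) + ((Matrix.of fun i j => deriv (fun z => Φ z i j) 0) *ᵥ a) = 0 →
          a = 0)) := by
  have hA0 : ∀ i j : Fin l, AnalyticAt ℂ (fun z => Φ z i j) 0 :=
    fun i j => hA i j 0 (by simp)
  have hball : ∀ᶠ z : ℂ in 𝓝 0, z ∈ Metric.ball (0 : ℂ) 1 :=
    eventually_of_mem (Metric.ball_mem_nhds _ one_pos) fun z hz => hz
  have hg : AnalyticAt ℂ (fun z => (Φ z).det) 0 := aux_det_analytic hA0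
  have horderne : analyticOrderAt (fun z => (Φ z).det) 0 ≠ ⊤ := by
    intro htop
    have h1 : ∀ᶠ z in 𝓝[≠] (0:ℂ), (Φ z).det = 0 :=
      (analyticOrderAt_eq_top.mp htop).filter_mono nhdsWithin_le_nhds
    have h2 : ∀ᶠ z in 𝓝[≠] (0:ℂ), z ∈ Metric.ball (0:ℂ) 1 :=
      hball.filter_mono nhdsWithin_le_nhds
    obtain ⟨z, ⟨hz1, hz2⟩, hz3⟩ := ((h1.and h2).and self_mem_nhdsWithin).exists
    exact hz z hz2 hz3 hz1
  obtain ⟨m, hm⟩ := WithTop.ne_top_iff_exists.mp horderne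
  obtain ⟨hfun, hh, hh0, hgf⟩ := (hg.analyticOrderAt_eq_natCast (n := m)).mp hm.symm
  have hm1 : 1 ≤ m := by
    rcases Nat.eq_zero_or_pos m with h | h
    · exfalso
      have := hgf.self_of_nhds
      rw [h0, h, sub_zero, pow_zero, one_smul] at this
      exact hh0 this.symm
    · exact h
  set b : Fin l → Fin l → ℂ → ℂ := fun i j z => (Φ z).adjugate i j * (hfun z)⁻¹ with hbdef
  have hb : ∀ i j, AnalyticAt ℂ (b i j) 0 :=
    fun i j => (aux_adj_analytic hA0 i j).mul (hh.inv hh0)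
  have hhne : ∀ᶠ z in 𝓝 (0:ℂ), hfun z ≠ 0 := hh.continuousAt.eventually_ne hh0
  have hE1 : ∀ᶠ z in 𝓝 (0:ℂ), ∀ i j,
      (∑ k, Φ z i k * b k j z) = z ^ m * (if i = j then 1 else 0) := by
    filter_upwards [hhne, hgf] with z hz1 hz2
    intro i j
    have hmul : ∑ k, Φ z i k * (Φ z).adjugate k j
        = (Φ z).det * (if i = j then 1 else 0) := by
      have h3 := congrFun (congrFun (Matrix.mul_adjugate (Φ z)) i) j
      simpa [Matrix.mul_apply, Matrix.one_apply, smul_eq_mul] using h3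
    have h4 : ∑ k, Φ z i k * b k j z
        = (∑ k, Φ z i k * (Φ z).adjugate k j) * (hfun z)⁻¹ := by
      rw [Finset.sum_mul]
      exact Finset.sum_congr rfl fun k _ => (mul_assoc _ _ _).symm
    rw [h4, hmul, hz2, sub_zero, smul_eq_mul]
    field_simp
  have hinv : ∀ᶠ z in 𝓝[≠] (0:ℂ), ∀ i j,
      (z • (Φ z)⁻¹) i j = z * (z ^ m)⁻¹ * b i j z := by
    filter_upwards [(hhne.and hgf).filter_mono nhdsWithin_le_nhds] with z hz12
    obtain ⟨hz1, hz2⟩ := hz12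
    intro i j
    rw [Matrix.smul_apply, Matrix.inv_def, Matrix.smul_apply, smul_eq_mul, smul_eq_mul,
      Ring.inverse_eq_inv', hz2, sub_zero, smul_eq_mul, hbdef]
    simp only [mul_inv]
    ring
  constructor
  · rintro ⟨L, hL⟩ a bb ha hab
    have hLij : ∀ i j, Tendsto (fun z => (z • (Φ z)⁻¹) i j) (𝓝[≠] (0:ℂ)) (𝓝 (L i j)) := by
      intro i j
      exact ((continuous_apply_apply i j).tendsto L).comp hL
    set ψ : Fin l → ℂ → ℂ := fun i z => ∑ k, Φ z i k * (a k + z * bb k) with hψdef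
    have hsl : ∀ i, Tendsto (fun z => z⁻¹ * ψ i z) (𝓝[≠] (0:ℂ)) (𝓝 0) := by
      intro i
      have hd : HasDerivAt (ψ i)
          (∑ k, (deriv (fun z => Φ z i k) 0 * a k + Φ 0 i k * bb k)) 0 := by
        simp only [hψdef]
        apply HasDerivAt.fun_sum
        intro k _
        have h1 : HasDerivAt (fun z => Φ z i k) (deriv (fun z => Φ z i k) 0) 0 :=
          ((hA0 i k).differentiableAt).hasDerivAt
        have h2 : HasDerivAt (fun z : ℂ => a k + z * bb k) (bb k) 0 := by
          simpa using ((hasDerivAt_id (0:ℂ)).mul_const (bb k)).const_add (a k)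
        simpa using h1.fun_mul h2
      have hzero : (∑ k, (deriv (fun z => Φ z i k) 0 * a k + Φ 0 i k * bb k)) = 0 := by
        have h5 := congrFun hab i
        simp only [Pi.add_apply, Matrix.mulVec, dotProduct, Matrix.of_apply,
          Pi.zero_apply] at h5
        rw [Finset.sum_add_distrib, add_comm]
        exact h5
      have hv0 : ψ i 0 = 0 := by
        have h6 := congrFun ha i
        simp only [Matrix.mulVec, dotProduct, Pi.zero_apply] at h6
        simp only [hψdef]
        simpa using h6
      rw [hzero] at hd
      have h7 := hasDerivAt_iff_tendsto_slope.mp hd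
      apply h7.congr'
      filter_upwards [self_mem_nhdsWithin] with z hz0
      rw [slope_def_field, hv0, sub_zero, sub_zero, div_eq_inv_mul]
    funext i
    have h1 : Tendsto (fun z : ℂ => a i + z * bb i) (𝓝[≠] (0:ℂ)) (𝓝 (a i)) := by
      have hc : ContinuousAt (fun z : ℂ => a i + z * bb i) 0 := by fun_prop
      simpa using hc.continuousWithinAt.tendsto
    have key : ∀ᶠ z in 𝓝[≠] (0:ℂ), a i + z * bb i
        = ∑ k, (z • (Φ z)⁻¹) i k * (z⁻¹ * ψ k z) := by
      filter_upwards [hball.filter_mono nhdsWithin_le_nhds, self_mem_nhdsWithin] with z hz1 hz0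
      have hz0' : z ≠ 0 := hz0
      have hu : IsUnit (Φ z).det := isUnit_iff_ne_zero.mpr (hz z hz1 hz0')
      have hv : (fun k => a k + z * bb k)
          = (Φ z)⁻¹ *ᵥ (Φ z *ᵥ fun k => a k + z * bb k) := by
        rw [Matrix.mulVec_mulVec, Matrix.nonsing_inv_mul _ hu, Matrix.one_mulVec]
      have h8 : a i + z * bb i
          = ((Φ z)⁻¹ *ᵥ (Φ z *ᵥ fun k => a k + z * bb k)) i := congrFun hv i
      rw [h8]
      simp only [Matrix.mulVec, dotProduct, hψdef]
      refine Finset.sum_congr rfl fun k _ => ?_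
      rw [Matrix.smul_apply, smul_eq_mul]
      field_simp
    have h2 : Tendsto (fun z : ℂ => a i + z * bb i) (𝓝[≠] (0:ℂ)) (𝓝 0) := by
      have h9 : Tendsto (fun z => ∑ k, (z • (Φ z)⁻¹) i k * (z⁻¹ * ψ k z)) (𝓝[≠] (0:ℂ))
          (𝓝 (∑ k, L i k * 0)) :=
        tendsto_finset_sum _ fun k _ => (hLij i k).mul (hsl k)
      simpa using h9.congr' (key.mono fun z h => h.symm)
    exact tendsto_nhds_unique h1 h2
  · intro hyp
    by_cases hcase : ∀ i j : Fin l, ((m - 1 : ℕ) : ℕ∞) ≤ analyticOrderAt (b i j) 0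
    · choose c hc hceq using fun i j => aux_factor (hb i j) (m-1) (hcase i j)
      refine ⟨Matrix.of fun i j => c i j 0, ?_⟩
      have hcont : Tendsto (fun z => (Matrix.of fun i j => c i j z : Matrix (Fin l) (Fin l) ℂ))
          (𝓝 (0:ℂ)) (𝓝 (Matrix.of fun i j => c i j 0)) := by
        apply tendsto_pi_nhds.mpr
        intro i
        rw [tendsto_pi_nhds]
        intro j
        exact (hc i j).continuousAt
      apply Tendsto.congr' _ (hcont.mono_left nhdsWithin_le_nhds)
      have hceq' : ∀ᶠ z in 𝓝 (0:ℂ), ∀ i j : Fin l, b i j z = z ^ (m-1) * c i j z :=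
        eventually_all.mpr fun i => eventually_all.mpr fun j => hceq i j
      filter_upwards [hinv, hceq'.filter_mono nhdsWithin_le_nhds, self_mem_nhdsWithin]
        with z h1 h2 hz0
      have hz0' : z ≠ 0 := hz0
      funext i j
      rw [Matrix.of_apply, h1 i j, h2 i j]
      have hzm : z ^ m = z * z ^ (m-1) := by
        rw [← pow_succ']
        congr 1
        omega
      rw [hzm]
      field_simp
    · exfalso
      push_neg at hcase
      obtain ⟨i₁, j₁, hlt⟩ := hcase
      have hne : analyticOrderAt (b i₁ j₁) 0 ≠ ⊤ := ne_top_of_lt hlt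
      obtain ⟨n₁, hn₁⟩ := WithTop.ne_top_iff_exists.mp hne
      have hTne : {n : ℕ | ∃ i j, analyticOrderAt (b i j) 0 = (n:ℕ∞)}.Nonempty := ⟨n₁, i₁, j₁, hn₁.symm⟩
      set q := sInf {n : ℕ | ∃ i j, analyticOrderAt (b i j) 0 = (n:ℕ∞)} with hqdef
      obtain ⟨i₀, j₀, hq⟩ := Nat.sInf_mem hTne
      have hqle : ∀ i j, (q:ℕ∞) ≤ analyticOrderAt (b i j) 0 := by
        intro i j
        rcases eq_or_ne (analyticOrderAt (b i j) 0) ⊤ with h | h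
        · rw [h]; exact le_top
        · obtain ⟨n, hn⟩ := WithTop.ne_top_iff_exists.mp h
          have hqn : q ≤ n := Nat.sInf_le ⟨i, j, hn.symm⟩
          rw [← hn]
          exact_mod_cast Nat.cast_le.mpr hqn
      have hq2 : q + 2 ≤ m := by
        have h1 : q ≤ n₁ := Nat.sInf_le ⟨i₁, j₁, hn₁.symm⟩
        have h2 : n₁ < m - 1 := by
          rw [← hn₁, ENat.some_eq_coe] at hlt
          exact ENat.coe_lt_coe.mp hlt

        omega
      choose c hc hceq using fun i j => aux_factor (hb i j) q (hqle i j)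
      obtain ⟨c₀, hc₀, hc₀0, heq₀⟩ := ((hb i₀ j₀).analyticOrderAt_eq_natCast (n := q)).mp hq
      have hcc : c i₀ j₀ 0 = c₀ 0 := by
        have t1 : Tendsto (c i₀ j₀) (𝓝[≠] (0:ℂ)) (𝓝 (c i₀ j₀ 0)) :=
          ((hc i₀ j₀).continuousAt.tendsto).mono_left nhdsWithin_le_nhds
        have ev : c₀ =ᶠ[𝓝[≠] (0:ℂ)] c i₀ j₀ := by
          filter_upwards [(hceq i₀ j₀).filter_mono nhdsWithin_le_nhds,
            heq₀.filter_mono nhdsWithin_le_nhds, self_mem_nhdsWithin] with z e1 e2 hz0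
          have hz0' : z ≠ 0 := hz0
          apply mul_left_cancel₀ (pow_ne_zero q hz0')
          rw [← e1]
          rw [e2, sub_zero, smul_eq_mul]
        have t2 : Tendsto (c i₀ j₀) (𝓝[≠] (0:ℂ)) (𝓝 (c₀ 0)) :=
          ((hc₀.continuousAt.tendsto).mono_left nhdsWithin_le_nhds).congr' ev
        exact tendsto_nhds_unique t1 t2
      set a : Fin l → ℂ := fun k => c k j₀ 0 with hadef
      set bv : Fin l → ℂ := fun k => deriv (c k j₀) 0 with hbvdef
      have hFev : ∀ i : Fin l, ∀ᶠ z in 𝓝 (0:ℂ),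
          (∑ k, Φ z i k * c k j₀ z) - z^(m-q) * (if i = j₀ then 1 else 0) = 0 := by
        intro i
        have hp : ∀ᶠ z in 𝓝[≠] (0:ℂ),
            (∑ k, Φ z i k * c k j₀ z) - z^(m-q) * (if i = j₀ then 1 else 0) = 0 := by
          filter_upwards [hE1.filter_mono nhdsWithin_le_nhds,
            (eventually_all.mpr fun k => hceq k j₀).filter_mono nhdsWithin_le_nhds,
            self_mem_nhdsWithin] with z h1 h2 hz0
          have hz0' : (z:ℂ) ≠ 0 := hz0
          have h3 : ∑ k, Φ z i k * b k j₀ z = z ^ m * (if i = j₀ then 1 else 0) := h1 i j₀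
          have h4 : ∑ k, Φ z i k * (z^q * c k j₀ z) = z^q * (∑ k, Φ z i k * c k j₀ z) := by
            rw [Finset.mul_sum]
            exact Finset.sum_congr rfl fun k _ => by ring
          have h5 : z ^ m = z^q * z^(m-q) := by
            rw [← pow_add]
            congr 1
            omega
          rw [sub_eq_zero]
          apply mul_left_cancel₀ (pow_ne_zero q hz0')
          rw [← h4]
          calc ∑ k, Φ z i k * (z^q * c k j₀ z) = ∑ k, Φ z i k * b k j₀ z := by
                refine Finset.sum_congr rfl fun k _ => ?_
                rw [h2 k]
            _ = z^m * (if i = j₀ then 1 else 0) := h3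
            _ = z^q * (z^(m-q) * (if i = j₀ then 1 else 0)) := by rw [h5]; ring
        have hFa : AnalyticAt ℂ (fun z => (∑ k, Φ z i k * c k j₀ z)
            - z^(m-q) * (if i = j₀ then 1 else 0)) 0 :=
          (Finset.analyticAt_fun_sum _ fun k _ => (hA0 i k).mul (hc k j₀)).sub
            ((analyticAt_id.pow _).mul analyticAt_const)
        exact hFa.frequently_zero_iff_eventually_zero.mp hp.frequently
      have ha : Φ 0 *ᵥ a = 0 := by
        funext i
        have hv := (hFev i).self_of_nhds
        rw [zero_pow (by omega : m - q ≠ 0)] at hv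
        simp only [Matrix.mulVec, dotProduct, Pi.zero_apply, hadef]
        simpa using hv
      have hab : (Φ 0 *ᵥ bv) + ((Matrix.of fun i j => deriv (fun z => Φ z i j) 0) *ᵥ a) = 0 := by
        funext i
        have hd : HasDerivAt (fun z => (∑ k, Φ z i k * c k j₀ z)
            - z^(m-q) * (if i = j₀ then 1 else 0))
            ((∑ k, (deriv (fun z => Φ z i k) 0 * a k + Φ 0 i k * bv k))
              - (((m-q : ℕ) : ℂ) * (0:ℂ)^(m-q-1) * (if i = j₀ then 1 else 0))) 0 := by
          apply HasDerivAt.sub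
          · apply HasDerivAt.fun_sum
            intro k _
            have h1 : HasDerivAt (fun z => Φ z i k) (deriv (fun z => Φ z i k) 0) 0 :=
              ((hA0 i k).differentiableAt).hasDerivAt
            have h2 : HasDerivAt (c k j₀) (deriv (c k j₀) 0) 0 :=
              ((hc k j₀).differentiableAt).hasDerivAt
            simpa [hadef, hbvdef] using h1.fun_mul h2
          · exact (hasDerivAt_pow (m-q) (0:ℂ)).mul_const _
        have hEE : (fun z => (∑ k, Φ z i k * c k j₀ z)
            - z^(m-q) * (if i = j₀ then 1 else 0)) =ᶠ[𝓝 (0:ℂ)] (fun _ => (0:ℂ)) := hFev i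
        have hderiv0 := hEE.deriv_eq
        rw [deriv_const] at hderiv0
        have hD := hd.deriv
        rw [hderiv0] at hD
        rw [zero_pow (by omega : m - q - 1 ≠ 0), mul_zero, zero_mul, sub_zero] at hD
        simp only [Pi.add_apply, Matrix.mulVec, dotProduct, Matrix.of_apply, Pi.zero_apply]
        rw [Finset.sum_add_distrib] at hD
        rw [add_comm]
        exact hD.symm
      have hane : a i₀ ≠ 0 := by
        rw [hadef]
        simpa [hcc] using hc₀0
      have := hyp a bv ha hab
      exact hane (by rw [this]; rfl)
end

section
/- Fix l ≥ 1 and n ≥ 1. Let (S_j)_{j∈ℕ} be real symmetric l×l matrices such that for every N ∈ ℕ the block Hankel matrix [S_{i+j}]_{0≤i,j≤N} is positive definite, and let P_n, P_{n−1}, A_n and Ψ̂_n be the associated orthonormal matrix polynomials, recurrence coefficient and matrix polynomial Ψ̂_n(z). Then: (1) det Ψ̂_n(z) ≠ 0 for every z ∈ ℂ with |z| ≤ 1 and z ∉ [−1,0)∪(0,1]; (2) Ψ̂_n has at most simple zeros on [−1,0)∪(0,1]: for every z₀ ∈ [−1,0)∪(0,1] and all vectors a, b ∈ ℂ^l, if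 Ψ̂_n(z₀)·a = 0 and Ψ̂_n(z₀)·b + Ψ̂_n′(z₀)·a = 0 then a = 0 (Ψ̂_n′ being the derivative of the matrix polynomial Ψ̂_n). -/
open Polynomial Matrix

/-- The matrix-valued pairing `⟨Q,R⟩ = Σ_{i,j} Q_i S_{i+j} R_jᵗ` induced by a sequence of
moment matrices `S`. -/
noncomputable def mPairing {l : ℕ} (S : ℕ → Matrix (Fin l) (Fin l) ℝ)
    (Q R : Polynomial (Matrix (Fin l) (Fin l) ℝ)) : Matrix (Fin l) (Fin l) ℝ :=
  ∑ i ∈ Q.support, ∑ j ∈ R.support, Q.coeff i * S (i + j) * (R.coeff j)ᵀ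

/-- All block Hankel matrices `[S_{i+j}]_{0≤i,j≤N}` are positive definite. -/
def HankelPosDef {l : ℕ} (S : ℕ → Matrix (Fin l) (Fin l) ℝ) : Prop :=
  ∀ N : ℕ, (Matrix.of fun p q : Fin (N+1) × Fin l =>
    S ((p.1 : ℕ) + (q.1 : ℕ)) p.2 q.2).PosDef

/-- `P` is the family of orthonormal matrix polynomials of `S`: `P n` has degree `n`, its
leading coefficient is lower triangular with positive diagonal, and `⟨P n, P r⟩ = δ_{n,r} I`. -/
def IsMOPS {l : ℕ} (S : ℕ → Matrix (Fin l) (Fin l) ℝ)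
    (P : ℕ → Polynomial (Matrix (Fin l) (Fin l) ℝ)) : Prop :=
  (∀ n : ℕ, (P n).degree ≤ (n : ℕ)) ∧
  (∀ n : ℕ, ∀ i j : Fin l, i < j → ((P n).coeff n) i j = 0) ∧
  (∀ n : ℕ, ∀ i : Fin l, 0 < ((P n).coeff n) i i) ∧
  (∀ n r : ℕ, mPairing S (P n) (P r) = if n = r then (1 : Matrix (Fin l) (Fin l) ℝ) else 0)

/-- Evaluation of a real-matrix-coefficient polynomial at a complex point (entrywise
complexification). -/
noncomputable def evCM {l : ℕ} (Q : Polynomial (Matrix (Fin l) (Fin l) ℝ)) (z : ℂ) :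
    Matrix (Fin l) (Fin l) ℂ :=
  ∑ i ∈ Q.support, z ^ i • (Q.coeff i).map (fun r : ℝ => (r : ℂ))

namespace PsiAux

variable {l : ℕ}

lemma mPairing_eq (S : ℕ → Matrix (Fin l) (Fin l) ℝ) (Q R : Polynomial (Matrix (Fin l) (Fin l) ℝ))
    {N M : ℕ} (hN : Q.natDegree < N) (hM : R.natDegree < M) :
    mPairing S Q R = ∑ i ∈ Finset.range N, ∑ j ∈ Finset.range M,
      Q.coeff i * S (i + j) * (R.coeff j)ᵀ := by
  unfold mPairing
  have h1 : ∀ i : ℕ, ∑ j ∈ R.support, Q.coeff i * S (i+j) * (R.coeff j)ᵀ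
      = ∑ j ∈ Finset.range M, Q.coeff i * S (i+j) * (R.coeff j)ᵀ := fun i =>
    Finset.sum_subset (supp_subset_range hM) (fun j _ hj => by
      simp [Polynomial.notMem_support_iff.mp hj])
  simp only [h1]
  exact Finset.sum_subset (supp_subset_range hN) (fun i _ hi => by
      simp [Polynomial.notMem_support_iff.mp hi])

lemma mPairing_zero_left (S : ℕ → Matrix (Fin l) (Fin l) ℝ) (R) :
    mPairing S 0 R = 0 := by simp [mPairing]

lemma mPairing_add_left (S : ℕ → Matrix (Fin l) (Fin l) ℝ) (Q1 Q2 R) :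
    mPairing S (Q1 + Q2) R = mPairing S Q1 R + mPairing S Q2 R := by
  set N := max Q1.natDegree Q2.natDegree + 1 with hN
  have h1 : Q1.natDegree < N := by omega
  have h2 : Q2.natDegree < N := by omega
  have h3 : (Q1 + Q2).natDegree < N := lt_of_le_of_lt (natDegree_add_le _ _) (by omega)
  rw [mPairing_eq S _ R h3 (lt_add_one _), mPairing_eq S _ R h1 (lt_add_one _),
    mPairing_eq S _ R h2 (lt_add_one _)]
  simp [coeff_add, add_mul, Finset.sum_add_distrib]

lemma mPairing_C_mul (S : ℕ → Matrix (Fin l) (Fin l) ℝ) (M) (Q R) :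
    mPairing S (C M * Q) R = M * mPairing S Q R := by
  have h : (C M * Q).natDegree < Q.natDegree + 1 :=
    lt_of_le_of_lt (le_trans (natDegree_mul_le) (by simp)) (lt_add_one _)
  rw [mPairing_eq S _ R h (lt_add_one _), mPairing_eq S Q R (lt_add_one _) (lt_add_one _)]
  simp [coeff_C_mul, Finset.mul_sum, mul_assoc]

lemma mPairing_sum_left (S : ℕ → Matrix (Fin l) (Fin l) ℝ) {ι : Type*} (s : Finset ι)
    (f : ι → Polynomial (Matrix (Fin l) (Fin l) ℝ)) (R) :
    mPairing S (∑ i ∈ s, f i) R = ∑ i ∈ s, mPairing S (f i) R := by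
  classical
  induction s using Finset.induction with
  | empty => simp [mPairing_zero_left]
  | insert x s' hx ih =>
                    rw [Finset.sum_insert hx, mPairing_add_left, ih, Finset.sum_insert hx]

lemma mPairing_X_mul (S : ℕ → Matrix (Fin l) (Fin l) ℝ) (Q R) :
    mPairing S (X * Q) R = mPairing S Q (X * R) := by
  have ha : (X * Q).natDegree < Q.natDegree + 2 := by
    have := natDegree_mul_le (p := (X : Polynomial (Matrix (Fin l) (Fin l) ℝ))) (q := Q)
    have h2 := natDegree_X_le (R := Matrix (Fin l) (Fin l) ℝ)
    omega
  have hd : (X * R).natDegree < R.natDegree + 2 := by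
    have := natDegree_mul_le (p := (X : Polynomial (Matrix (Fin l) (Fin l) ℝ))) (q := R)
    have h2 := natDegree_X_le (R := Matrix (Fin l) (Fin l) ℝ)
    omega
  rw [mPairing_eq S _ R ha (lt_add_one _), mPairing_eq S Q _ (lt_add_one _) hd]
  have h0 : (X * Q).coeff 0 = 0 := by rw [mul_coeff_zero]; simp
  have h0' : (X * R).coeff 0 = 0 := by rw [mul_coeff_zero]; simp
  have hR : ∀ i : ℕ, ∑ j ∈ Finset.range (R.natDegree+2), Q.coeff i * S (i+j) * ((X*R).coeff j)ᵀ
      = ∑ j ∈ Finset.range (R.natDegree+1), Q.coeff i * S (i+(j+1)) * (R.coeff j)ᵀ := by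
    intro i
    rw [Finset.sum_range_succ']
    simp [coeff_X_mul, h0']
  simp only [hR]
  rw [Finset.sum_range_succ']
  simp only [h0, zero_mul, Finset.sum_const_zero, add_zero, coeff_X_mul]
  refine Finset.sum_congr rfl fun i _ => Finset.sum_congr rfl fun j _ => ?_
  have : i + 1 + j = i + (j + 1) := by omega
  rw [this]

lemma mPairing_transpose (S : ℕ → Matrix (Fin l) (Fin l) ℝ) (hS : ∀ j, (S j).IsSymm) (Q R) :
    (mPairing S Q R)ᵀ = mPairing S R Q := by
  unfold mPairing
  rw [Finset.sum_comm]
  rw [transpose_sum]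
  refine Finset.sum_congr rfl fun j _ => ?_
  rw [transpose_sum]
  refine Finset.sum_congr rfl fun i _ => ?_
  rw [transpose_mul, transpose_mul, transpose_transpose, (hS (i+j)).eq, add_comm i j]
  rw [mul_assoc]


lemma lowerTri_det_pos (M : Matrix (Fin l) (Fin l) ℝ) (htri : ∀ i j : Fin l, i < j → M i j = 0)
    (hdiag : ∀ i : Fin l, 0 < M i i) : 0 < M.det := by
  have hbt : M.BlockTriangular OrderDual.toDual := fun i j h => htri i j h
  rw [Matrix.det_of_lowerTriangular M hbt]
  exact Finset.prod_pos fun i _ => hdiag i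

section MOPS

variable (S : ℕ → Matrix (Fin l) (Fin l) ℝ) (P : ℕ → Polynomial (Matrix (Fin l) (Fin l) ℝ))

/-- leading coefficient -/
noncomputable def kap (k : ℕ) : Matrix (Fin l) (Fin l) ℝ := (P k).coeff k

variable {S P}

lemma kap_det_unit (hP : IsMOPS S P) (k : ℕ) : IsUnit (kap P k).det := by
  obtain ⟨h1, h2, h3, h4⟩ := hP
  exact (lowerTri_det_pos _ (h2 k) (h3 k)).ne'.isUnit

lemma span_lemma (hP : IsMOPS S P) :
    ∀ m : ℕ, ∀ Q : Polynomial (Matrix (Fin l) (Fin l) ℝ), Q.degree ≤ (m : ℕ) →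
      ∃ c : ℕ → Matrix (Fin l) (Fin l) ℝ, Q = ∑ r ∈ Finset.range (m+1), C (c r) * P r := by
  intro m
  induction m with
  | zero =>
    intro Q hQ
    refine ⟨fun _ => Q.coeff 0 * (kap P 0)⁻¹, ?_⟩
    have hP0 : P 0 = C (kap P 0) := by
      have := hP.1 0
      simpa [kap] using (Polynomial.eq_C_of_degree_le_zero (by simpa using this))
    have hQ0 : Q = C (Q.coeff 0) := Polynomial.eq_C_of_degree_le_zero (by simpa using hQ)
    rw [Finset.sum_range_one, hP0, ← C_mul, mul_assoc,
      Matrix.nonsing_inv_mul _ (kap_det_unit hP 0), mul_one, ← hQ0]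
  | succ m ih =>
    intro Q hQ
    set M := Q.coeff (m+1) * (kap P (m+1))⁻¹ with hM
    set Q' := Q - C M * P (m+1) with hQ'
    have hdeg : Q'.degree ≤ (m : ℕ) := by
      rw [Polynomial.degree_le_iff_coeff_zero]
      intro j hj
      have hjm : (m : ℕ) < j := by exact_mod_cast hj
      rcases Nat.lt_or_ge j (m+2) with hj2 | hj2
      · have hjeq : j = m + 1 := by omega
        subst hjeq
        have hco : (P (m+1)).coeff (m+1) = kap P (m+1) := rfl
        simp only [hQ', Polynomial.coeff_sub, coeff_C_mul, hco, hM]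
        rw [mul_assoc, Matrix.nonsing_inv_mul _ (kap_det_unit hP (m+1)), mul_one, sub_self]
      · have hz1 : Q.coeff j = 0 :=
          Polynomial.coeff_eq_zero_of_degree_lt (lt_of_le_of_lt hQ (by exact_mod_cast by omega))
        have hz2 : (P (m+1)).coeff j = 0 :=
          Polynomial.coeff_eq_zero_of_degree_lt (lt_of_le_of_lt (hP.1 (m+1)) (by exact_mod_cast by omega))
        simp [hQ', hz1, hz2]
    obtain ⟨c, hc⟩ := ih Q' hdeg
    refine ⟨Function.update c (m+1) M, ?_⟩
    rw [Finset.sum_range_succ, Function.update_self]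
    have : ∑ r ∈ Finset.range (m+1), C (Function.update c (m+1) M r) * P r
        = ∑ r ∈ Finset.range (m+1), C (c r) * P r := by
      refine Finset.sum_congr rfl fun r hr => ?_
      rw [Function.update_of_ne (by simp at hr; omega)]
    rw [this, ← hc, hQ']
    abel

lemma coeff_extract (hP : IsMOPS S P) {m : ℕ} {c : ℕ → Matrix (Fin l) (Fin l) ℝ}
    {Q : Polynomial (Matrix (Fin l) (Fin l) ℝ)}
    (hc : Q = ∑ r ∈ Finset.range (m+1), C (c r) * P r) (s : ℕ) :
    mPairing S Q (P s) = if s ≤ m then c s else 0 := by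
  rw [hc, mPairing_sum_left]
  have : ∀ r, mPairing S (C (c r) * P r) (P s) = if r = s then c r else 0 := by
    intro r
    rw [mPairing_C_mul, hP.2.2.2 r s]
    split <;> simp
  simp only [this]
  rw [Finset.sum_ite_eq' (Finset.range (m+1)) s c]
  simp [Nat.lt_succ_iff]

lemma expand (hP : IsMOPS S P) {m : ℕ} {Q : Polynomial (Matrix (Fin l) (Fin l) ℝ)}
    (hdeg : Q.degree ≤ (m : ℕ)) :
    Q = ∑ r ∈ Finset.range (m+1), C (mPairing S Q (P r)) * P r := by
  obtain ⟨c, hc⟩ := span_lemma hP m Q hdeg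
  have : ∀ r ∈ Finset.range (m+1), C (mPairing S Q (P r)) * P r = C (c r) * P r := by
    intro r hr
    rw [coeff_extract hP hc r, if_pos (by simp at hr; omega)]
  rw [Finset.sum_congr rfl this, ← hc]

lemma orth_higher (hP : IsMOPS S P) {m : ℕ} {Q : Polynomial (Matrix (Fin l) (Fin l) ℝ)}
    (hdeg : Q.degree ≤ (m : ℕ)) {s : ℕ} (hs : m < s) : mPairing S Q (P s) = 0 := by
  obtain ⟨c, hc⟩ := span_lemma hP m Q hdeg
  rw [coeff_extract hP hc s, if_neg (by omega)]

variable (S P) in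
/-- recurrence coefficients -/
noncomputable def DD (k r : ℕ) : Matrix (Fin l) (Fin l) ℝ := mPairing S (X * P k) (P r)

variable (hS : ∀ j, (S j).IsSymm) (hP : IsMOPS S P)
include hS hP

lemma DD_symm (k r : ℕ) : DD S P k r = (DD S P r k)ᵀ := by
  unfold DD
  rw [← mPairing_transpose S hS, mPairing_X_mul]

lemma degree_X_mul_P (k : ℕ) : (X * P k).degree ≤ ((k+1 : ℕ) : WithBot ℕ) := by
  refine le_trans (degree_mul_le _ _) ?_
  have h1 := degree_X_le (R := Matrix (Fin l) (Fin l) ℝ)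
  have h2 := hP.1 k
  calc X.degree + (P k).degree ≤ 1 + (k : WithBot ℕ) := add_le_add h1 h2
  _ = ((k+1 : ℕ) : WithBot ℕ) := by push_cast; ring

lemma DD_low {k r : ℕ} (hr : r + 1 < k) : DD S P k r = 0 := by
  unfold DD
  rw [mPairing_X_mul, ← mPairing_transpose S hS]
  rw [orth_higher hP (degree_X_mul_P hS hP r) hr, Matrix.transpose_zero]

lemma recurrence (k : ℕ) (hk : 1 ≤ k) :
    X * P k = C (DD S P k (k+1)) * P (k+1) + C (DD S P k k) * P k
      + C ((DD S P (k-1) k)ᵀ) * P (k-1) := by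
  have hexp := expand hP (m := k+1) (Q := X * P k) (degree_X_mul_P hS hP k)
  have hz : ∀ r ∈ Finset.range (k+2), r ∉ ({k-1, k, k+1} : Finset ℕ) →
      C (mPairing S (X * P k) (P r)) * P r = 0 := by
    intro r hrr hr
    simp only [Finset.mem_range] at hrr
    simp only [Finset.mem_insert, Finset.mem_singleton] at hr
    push_neg at hr
    have : mPairing S (X * P k) (P r) = 0 := DD_low hS hP (by omega)
    rw [this, map_zero, zero_mul]
  have hsub : ({k-1, k, k+1} : Finset ℕ) ⊆ Finset.range (k+2) := by
    intro r hr
    simp only [Finset.mem_insert, Finset.mem_singleton] at hr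
    simp only [Finset.mem_range]
    omega
  rw [hexp, ← Finset.sum_subset hsub hz]
  have h1 : (k:ℕ) - 1 ∉ ({k, k+1} : Finset ℕ) := by simp; omega
  have h2 : k ∉ ({k+1} : Finset ℕ) := by simp
  rw [Finset.sum_insert h1, Finset.sum_insert h2, Finset.sum_singleton]
  have hD : mPairing S (X * P k) (P (k-1)) = (mPairing S (X * P (k-1)) (P k))ᵀ := by
    have := DD_symm hS hP k (k-1)
    simp only [DD] at this
    exact this
  simp only [DD]
  rw [hD]
  abel

lemma recurrence0 :
    X * P 0 = C (DD S P 0 1) * P 1 + C (DD S P 0 0) * P 0 := by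
  have hexp := expand hP (m := 1) (Q := X * P 0) (by simpa using degree_X_mul_P hS hP 0)
  rw [hexp, Finset.sum_range_succ, Finset.sum_range_one]
  unfold DD
  abel

lemma kap_rel (k : ℕ) : kap P k = DD S P k (k+1) * kap P (k+1) := by
  have h0 : ((X * P k)).coeff (k+1) = kap P k := by
    rw [coeff_X_mul]; rfl
  have hz1 : (P k).coeff (k+1) = 0 :=
    Polynomial.coeff_eq_zero_of_degree_lt (lt_of_le_of_lt (hP.1 k) (by exact_mod_cast by omega))
  rcases Nat.eq_zero_or_pos k with hk | hk
  · subst hk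
    have := congrArg (fun p => Polynomial.coeff p 1) (recurrence0 hS hP)
    simpa [coeff_C_mul, hz1, kap] using this
  · have := congrArg (fun p => Polynomial.coeff p (k+1)) (recurrence hS hP k hk)
    have hz2 : (P (k-1)).coeff (k+1) = 0 :=
      Polynomial.coeff_eq_zero_of_degree_lt (lt_of_le_of_lt (hP.1 (k-1)) (by exact_mod_cast by omega))
    simpa [coeff_C_mul, hz1, hz2, kap] using this

lemma DD_det_unit (k : ℕ) : IsUnit (DD S P k (k+1)).det := by
  have := kap_rel hS hP k
  have hdet : (kap P k).det = (DD S P k (k+1)).det * (kap P (k+1)).det := by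
    rw [this, Matrix.det_mul]
  exact isUnit_of_mul_isUnit_left (hdet ▸ kap_det_unit hP k)

lemma DD_diag_symm (k : ℕ) : (DD S P k k)ᵀ = DD S P k k := (DD_symm hS hP k k).symm

end MOPS

section Complexify

noncomputable def ec : Matrix (Fin l) (Fin l) ℝ →+* Matrix (Fin l) (Fin l) ℂ :=
  (Complex.ofRealHom).mapMatrix

lemma ec_apply (M : Matrix (Fin l) (Fin l) ℝ) : ec M = M.map (fun r : ℝ => (r : ℂ)) := rfl

lemma ec_transpose (M : Matrix (Fin l) (Fin l) ℝ) : (ec M)ᵀ = ec Mᵀ := by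
  ext i j; rfl

lemma ec_conj (M : Matrix (Fin l) (Fin l) ℝ) : (ec M).map (starRingEnd ℂ) = ec M := by
  ext i j
  simp [ec_apply, Matrix.map_apply, Complex.conj_ofReal]

lemma ec_det_unit {M : Matrix (Fin l) (Fin l) ℝ} (h : IsUnit M.det) : IsUnit (ec M).det := by
  have : (ec M).det = ((M.det : ℝ) : ℂ) := (RingHom.map_det Complex.ofRealHom M).symm
  rw [this]
  simp only [isUnit_iff_ne_zero] at h ⊢
  exact_mod_cast h

lemma smul_one_commute (z : ℂ) (M : Matrix (Fin l) (Fin l) ℂ) :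
    Commute M (z • (1 : Matrix (Fin l) (Fin l) ℂ)) := by
  unfold Commute SemiconjBy
  rw [mul_smul_comm, smul_mul_assoc, mul_one, one_mul]

lemma evCM_eval₂ (Q : Polynomial (Matrix (Fin l) (Fin l) ℝ)) (z : ℂ) :
    evCM Q z = Polynomial.eval₂ ec (z • (1 : Matrix (Fin l) (Fin l) ℂ)) Q := by
  rw [Polynomial.eval₂_eq_sum, Polynomial.sum_def]
  unfold evCM
  refine Finset.sum_congr rfl fun i _ => ?_
  rw [_root_.smul_pow, one_pow, mul_smul_comm, mul_one, ec_apply]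

lemma evCM_mul (Q R : Polynomial (Matrix (Fin l) (Fin l) ℝ)) (z : ℂ) :
    evCM (Q * R) z = evCM Q z * evCM R z := by
  simp only [evCM_eval₂]
  exact Polynomial.eval₂_mul_noncomm _ _ (fun k => smul_one_commute z _)

lemma evCM_add (Q R : Polynomial (Matrix (Fin l) (Fin l) ℝ)) (z : ℂ) :
    evCM (Q + R) z = evCM Q z + evCM R z := by
  simp only [evCM_eval₂, Polynomial.eval₂_add]

lemma evCM_C (M : Matrix (Fin l) (Fin l) ℝ) (z : ℂ) : evCM (C M) z = ec M := by
  simp only [evCM_eval₂, Polynomial.eval₂_C]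

lemma evCM_X (z : ℂ) : evCM (X : Polynomial (Matrix (Fin l) (Fin l) ℝ)) z
    = z • (1 : Matrix (Fin l) (Fin l) ℂ) := by
  simp only [evCM_eval₂, Polynomial.eval₂_X]

lemma evCM_C_mul (M : Matrix (Fin l) (Fin l) ℝ) (Q) (z : ℂ) :
    evCM (C M * Q) z = ec M * evCM Q z := by
  rw [evCM_mul, evCM_C]

lemma evCM_X_mul (Q : Polynomial (Matrix (Fin l) (Fin l) ℝ)) (z : ℂ) : evCM (X * Q) z = z • evCM Q z := by
  rw [evCM_mul, evCM_X, smul_mul_assoc, one_mul]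

lemma evCM_conj (Q : Polynomial (Matrix (Fin l) (Fin l) ℝ)) (z : ℂ) :
    evCM Q ((starRingEnd ℂ) z) = (evCM Q z).map (starRingEnd ℂ) := by
  ext p q
  unfold evCM
  rw [Matrix.map_apply, Matrix.sum_apply, Matrix.sum_apply, map_sum]
  refine Finset.sum_congr rfl fun i _ => ?_
  simp only [Matrix.smul_apply, Matrix.map_apply, smul_eq_mul, _root_.map_mul, map_pow,
    Complex.conj_ofReal]

lemma evCM_real (Q : Polynomial (Matrix (Fin l) (Fin l) ℝ)) (t : ℝ) :
    (evCM Q (t : ℂ)).map (starRingEnd ℂ) = evCM Q (t : ℂ) := by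
  rw [← evCM_conj, Complex.conj_ofReal]

end Complexify

section CD

lemma cd_telescope (u w : ℕ → Matrix (Fin l) (Fin l) ℂ)
    (α β : ℕ → Matrix (Fin l) (Fin l) ℂ) (x y : ℂ)
    (hβ : ∀ k, (β k)ᵀ = β k)
    (hu0 : x • u 0 = α 1 * u 1 + β 0 * u 0)
    (hu : ∀ k, 1 ≤ k → x • u k = α (k+1) * u (k+1) + β k * u k + (α k)ᵀ * u (k-1))
    (hw0 : y • w 0 = α 1 * w 1 + β 0 * w 0)
    (hw : ∀ k, 1 ≤ k → y • w k = α (k+1) * w (k+1) + β k * w k + (α k)ᵀ * w (k-1)) :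
    ∀ m : ℕ, (w m)ᵀ * (α (m+1) * u (m+1)) - (w (m+1))ᵀ * ((α (m+1))ᵀ * u m)
      = (x - y) • ∑ k ∈ Finset.range (m+1), (w k)ᵀ * u k := by
  intro m
  induction m with
  | zero =>
    have h1 : α 1 * u 1 = x • u 0 - β 0 * u 0 := by rw [hu0]; abel
    have h2 : (w 1)ᵀ * (α 1)ᵀ = y • (w 0)ᵀ - (w 0)ᵀ * β 0 := by
      have := congrArg Matrix.transpose hw0
      simp only [Matrix.transpose_smul, Matrix.transpose_add, Matrix.transpose_mul, hβ] at this
      rw [this]; abel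
    rw [Finset.sum_range_one, h1, ← Matrix.mul_assoc, h2]
    simp only [Matrix.mul_sub, Matrix.sub_mul, mul_smul_comm, smul_mul_assoc, sub_smul,
      Matrix.mul_assoc]
    abel
  | succ m ih =>
    rw [Finset.sum_range_succ, smul_add, ← ih]
    have h1 : α (m+2) * u (m+2) = x • u (m+1) - β (m+1) * u (m+1) - (α (m+1))ᵀ * u m := by
      have := hu (m+1) (by omega)
      simp only [Nat.add_sub_cancel] at this
      rw [this]; abel
    have h2 : (w (m+2))ᵀ * (α (m+2))ᵀ
        = y • (w (m+1))ᵀ - (w (m+1))ᵀ * β (m+1) - (w m)ᵀ * α (m+1) := by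
      have := congrArg Matrix.transpose (hw (m+1) (by omega))
      simp only [Nat.add_sub_cancel, Matrix.transpose_smul, Matrix.transpose_add,
        Matrix.transpose_mul, Matrix.transpose_transpose, hβ,
        show m+1+1 = m+2 from rfl] at this
      rw [this]; abel
    rw [h1, ← Matrix.mul_assoc, h2]
    simp only [Matrix.mul_sub, Matrix.sub_mul, mul_smul_comm, smul_mul_assoc, sub_smul,
      Matrix.mul_assoc]
    abel

lemma mulVec_zero_cancel {M : Matrix (Fin l) (Fin l) ℂ} (h : IsUnit M.det)
    {a : Fin l → ℂ} (ha : M *ᵥ a = 0) : a = 0 := by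
  have h2 := congrArg (fun v => M⁻¹ *ᵥ v) ha
  simpa [Matrix.mulVec_mulVec, Matrix.nonsing_inv_mul _ h] using h2

end CD

section Main

variable {S : ℕ → Matrix (Fin l) (Fin l) ℝ} {P : ℕ → Polynomial (Matrix (Fin l) (Fin l) ℝ)}
variable (hS : ∀ j, (S j).IsSymm) (hP : IsMOPS S P)
include hS hP

lemma rec_point0 (x : ℂ) :
    x • evCM (P 0) x = ec (DD S P 0 1) * evCM (P 1) x + ec (DD S P 0 0) * evCM (P 0) x := by
  have := congrArg (fun Q => evCM Q x) (recurrence0 hS hP)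
  simpa only [evCM_X_mul, evCM_add, evCM_C_mul] using this

lemma rec_point (x : ℂ) (k : ℕ) (hk : 1 ≤ k) :
    x • evCM (P k) x = ec (DD S P k (k+1)) * evCM (P (k+1)) x
      + ec (DD S P k k) * evCM (P k) x + (ec (DD S P (k-1) k))ᵀ * evCM (P (k-1)) x := by
  have := congrArg (fun Q => evCM Q x) (recurrence hS hP k hk)
  simpa only [evCM_X_mul, evCM_add, evCM_C_mul, ec_transpose] using this

/-- Matrix CD identity at two points. -/
lemma cd_matrix (x y : ℂ) (m : ℕ) :
    (evCM (P m) y)ᵀ * (ec (DD S P m (m+1)) * evCM (P (m+1)) x)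
      - (evCM (P (m+1)) y)ᵀ * ((ec (DD S P m (m+1)))ᵀ * evCM (P m) x)
      = (x - y) • ∑ k ∈ Finset.range (m+1), (evCM (P k) y)ᵀ * evCM (P k) x := by
  have := cd_telescope (fun k => evCM (P k) x) (fun k => evCM (P k) y)
    (fun k => ec (DD S P (k-1) k)) (fun k => ec (DD S P k k)) x y
    (fun k => by rw [ec_transpose, DD_diag_symm hS hP])
    (by simpa using rec_point0 hS hP x)
    (fun k hk => by simpa using rec_point hS hP x k hk)
    (by simpa using rec_point0 hS hP y)
    (fun k hk => by simpa using rec_point hS hP y k hk) m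
  simpa using this

lemma u0_kernel (x : ℂ) {a : Fin l → ℂ} (ha : evCM (P 0) x *ᵥ a = 0) : a = 0 := by
  have hP0 : P 0 = C (kap P 0) := by
    simpa [kap] using (Polynomial.eq_C_of_degree_le_zero (by simpa using hP.1 0))
  rw [hP0, evCM_C] at ha
  exact mulVec_zero_cancel (ec_det_unit (kap_det_unit hP 0)) ha

/-- Downward induction: joint kernel forces `a = 0`. -/
lemma descend (x : ℂ) {a : Fin l → ℂ} {n : ℕ} (hn : 1 ≤ n)
    (h1 : evCM (P n) x *ᵥ a = 0)
    (h2 : (ec (DD S P (n-1) n))ᵀ *ᵥ (evCM (P (n-1)) x *ᵥ a) = 0) : a = 0 := by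
  have key : ∀ j : ℕ, j ≤ n - 1 →
      evCM (P (n-j)) x *ᵥ a = 0 ∧ (ec (DD S P (n-j-1) (n-j)))ᵀ *ᵥ (evCM (P (n-j-1)) x *ᵥ a) = 0 := by
    intro j
    induction j with
    | zero => intro _; exact ⟨h1, by simpa using h2⟩
    | succ j ih =>
      intro hj
      obtain ⟨hu, hc⟩ := ih (by omega)
      have hk1 : 1 ≤ n - j - 1 := by omega
      have hunit : IsUnit ((ec (DD S P (n-j-1) (n-j)))ᵀ).det := by
        rw [Matrix.det_transpose]
        have : n - j = (n-j-1) + 1 := by omega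
        rw [this]
        exact ec_det_unit (DD_det_unit hS hP (n-j-1))
      have hprev : evCM (P (n-j-1)) x *ᵥ a = 0 := mulVec_zero_cancel hunit hc
      have heq : n - (j+1) = n - j - 1 := by omega
      rw [heq]
      refine ⟨hprev, ?_⟩
      have hrec := rec_point hS hP x (n-j-1) hk1
      have := congrArg (fun M => M *ᵥ a) hrec
      simp only [Matrix.add_mulVec, Matrix.smul_mulVec, ← Matrix.mulVec_mulVec] at this
      have hup : n - j - 1 + 1 = n - j := by omega
      rw [hup] at this
      rw [hu, hprev] at this
      simp only [Matrix.mulVec_zero, smul_zero, add_zero, zero_add] at this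
      exact this.symm
  have hfin := key (n-1) le_rfl
  have e1 : n - (n-1) = 1 := by omega
  rw [e1] at hfin
  have hunit : IsUnit ((ec (DD S P 0 1))ᵀ).det := by
    rw [Matrix.det_transpose]
    exact ec_det_unit (DD_det_unit hS hP 0)
  have h0 : evCM (P 0) x *ᵥ a = 0 := mulVec_zero_cancel hunit (by simpa using hfin.2)
  exact u0_kernel hS hP x h0


omit hS hP

/-- squared norm of a complex vector -/
noncomputable def sqnorm (v : Fin l → ℂ) : ℝ := ∑ i, Complex.normSq (v i)

lemma star_dot_self (v : Fin l → ℂ) : star v ⬝ᵥ v = ((sqnorm v : ℝ) : ℂ) := by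
  unfold sqnorm
  rw [Complex.ofReal_sum]
  unfold dotProduct
  refine Finset.sum_congr rfl fun i _ => ?_
  rw [Pi.star_apply, Complex.star_def, ← Complex.normSq_eq_conj_mul_self]

lemma sqnorm_nonneg (v : Fin l → ℂ) : 0 ≤ sqnorm v :=
  Finset.sum_nonneg fun i _ => Complex.normSq_nonneg _

lemma sqnorm_eq_zero {v : Fin l → ℂ} (h : sqnorm v = 0) : v = 0 := by
  funext i
  have := (Finset.sum_eq_zero_iff_of_nonneg (fun i _ => Complex.normSq_nonneg (v i))).mp h i
    (Finset.mem_univ i)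
  exact Complex.normSq_eq_zero.mp this

lemma sandwich_conj (M N : Matrix (Fin l) (Fin l) ℂ) (a : Fin l → ℂ) :
    star a ⬝ᵥ (((M.map (starRingEnd ℂ))ᵀ * N) *ᵥ a) = star (M *ᵥ a) ⬝ᵥ (N *ᵥ a) := by
  have h1 : (M.map (starRingEnd ℂ))ᵀ = Mᴴ := rfl
  rw [h1, ← Matrix.mulVec_mulVec, Matrix.dotProduct_mulVec, ← Matrix.star_mulVec]

include hS hP

lemma kernel_relation {n : ℕ} {Ψ : Polynomial (Matrix (Fin l) (Fin l) ℝ)}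
    (hΨ : ∀ z : ℂ, z ≠ 0 →
      evCM Ψ z = z ^ n •
        (evCM (P n) ((z + z⁻¹) / 2)
          - (2 * z) • (((mPairing S (X * P (n-1)) (P n)).map
                (fun r : ℝ => (r : ℂ)))ᵀ * evCM (P (n-1)) ((z + z⁻¹) / 2))))
    {z : ℂ} (hz : z ≠ 0) {a : Fin l → ℂ} (ha : evCM Ψ z *ᵥ a = 0) :
    evCM (P n) ((z + z⁻¹) / 2) *ᵥ a
      = (2*z) • ((ec (DD S P (n-1) n))ᵀ *ᵥ (evCM (P (n-1)) ((z + z⁻¹) / 2) *ᵥ a)) := by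
  have hG : ((mPairing S (X * P (n-1)) (P n)).map (fun r : ℝ => (r : ℂ)))ᵀ
      = (ec (DD S P (n-1) n))ᵀ := by rw [ec_apply]; rfl
  rw [hΨ z hz, hG] at ha
  rw [Matrix.smul_mulVec, smul_eq_zero] at ha
  rcases ha with h | h
  · exact absurd h (pow_ne_zero _ hz)
  · rw [Matrix.sub_mulVec, Matrix.smul_mulVec, sub_eq_zero] at h
    rw [h, ← Matrix.mulVec_mulVec]

lemma part1_core {n : ℕ} (hn : 1 ≤ n) {Ψ : Polynomial (Matrix (Fin l) (Fin l) ℝ)}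
    (hΨ : ∀ z : ℂ, z ≠ 0 →
      evCM Ψ z = z ^ n •
        (evCM (P n) ((z + z⁻¹) / 2)
          - (2 * z) • (((mPairing S (X * P (n-1)) (P n)).map
                (fun r : ℝ => (r : ℂ)))ᵀ * evCM (P (n-1)) ((z + z⁻¹) / 2))))
    {z : ℂ} (him : z.im ≠ 0) (habs : Complex.normSq z ≤ 1) {a : Fin l → ℂ}
    (ha : evCM Ψ z *ᵥ a = 0) : a = 0 := by
  have hz : z ≠ 0 := fun h => him (by simp [h])
  set x : ℂ := (z + z⁻¹) / 2 with hx
  set u : ℕ → Matrix (Fin l) (Fin l) ℂ := fun k => evCM (P k) x with hu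
  set G : Matrix (Fin l) (Fin l) ℂ := (ec (DD S P (n-1) n))ᵀ with hGdef
  set c : Fin l → ℂ := G *ᵥ (u (n-1) *ᵥ a) with hc
  have hker : u n *ᵥ a = (2*z) • c := kernel_relation hS hP hΨ hz ha
  -- CD identity at (x, conj x), m = n-1
  have hcd := cd_matrix hS hP x ((starRingEnd ℂ) x) (n-1)
  have hn1 : n - 1 + 1 = n := by omega
  rw [hn1] at hcd
  have hcd2 := congrArg (fun M => star a ⬝ᵥ (M *ᵥ a)) hcd
  simp only [evCM_conj] at hcd2
  have hufold : ∀ k, evCM (P k) x = u k := fun k => rfl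
  simp only [hufold] at hcd2
  -- sandwich the three terms
  have hterm1 : star a ⬝ᵥ ((((u (n-1)).map (starRingEnd ℂ))ᵀ * (ec (DD S P (n-1) n) * u n)) *ᵥ a)
      = (2*z) * ((sqnorm c : ℝ) : ℂ) := by
    rw [sandwich_conj]
    rw [← Matrix.mulVec_mulVec, hker]
    have hGH : Gᴴ = ec (DD S P (n-1) n) := by
      ext i j
      simp [hGdef, Matrix.conjTranspose_apply, Matrix.transpose_apply, ec_apply,
        Matrix.map_apply, Complex.conj_ofReal]
    have hsc : star c = star (u (n-1) *ᵥ a) ᵥ* ec (DD S P (n-1) n) := by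
      rw [hc, Matrix.star_mulVec, hGH]
    rw [Matrix.mulVec_smul, dotProduct_smul, Matrix.dotProduct_mulVec, ← hsc,
      star_dot_self, smul_eq_mul]
  have hterm2 : star a ⬝ᵥ ((((u n).map (starRingEnd ℂ))ᵀ * ((ec (DD S P (n-1) n))ᵀ * u (n-1))) *ᵥ a)
      = (2 * (starRingEnd ℂ) z) * ((sqnorm c : ℝ) : ℂ) := by
    rw [sandwich_conj, ← Matrix.mulVec_mulVec, ← hGdef, ← hc, hker, star_smul,
      smul_dotProduct, star_dot_self, smul_eq_mul]
    have : star (2*z) = 2 * (starRingEnd ℂ) z := by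
      rw [Complex.star_def, _root_.map_mul, map_ofNat]
    rw [this]
  -- scalarize the CD identity
  have hsum : ∀ (M : ℕ → Matrix (Fin l) (Fin l) ℂ) (s : Finset ℕ),
      star a ⬝ᵥ ((∑ k ∈ s, M k) *ᵥ a) = ∑ k ∈ s, star a ⬝ᵥ (M k *ᵥ a) := by
    intro M s
    induction s using Finset.induction with
    | empty => simp
    | insert x' s' hx ih =>  rw [Finset.sum_insert hx, Finset.sum_insert hx,
        Matrix.add_mulVec, dotProduct_add, ih]
  rw [Matrix.sub_mulVec, dotProduct_sub, hterm1, hterm2, Matrix.smul_mulVec,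
    dotProduct_smul, hsum, smul_eq_mul] at hcd2
  have hterm3 : ∀ k, star a ⬝ᵥ ((((u k).map (starRingEnd ℂ))ᵀ * u k) *ᵥ a)
      = ((sqnorm (u k *ᵥ a) : ℝ) : ℂ) := by
    intro k
    rw [sandwich_conj, star_dot_self]
  simp only [hterm3] at hcd2
  set τ : ℝ := ∑ k ∈ Finset.range n, sqnorm (u k *ᵥ a) with hτ
  have hsumc : ∑ k ∈ Finset.range n, ((sqnorm (u k *ᵥ a) : ℝ) : ℂ) = ((τ : ℝ) : ℂ) := by
    rw [hτ, Complex.ofReal_sum]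
  rw [hsumc] at hcd2
  -- compute x - conj x
  have h2c : (starRingEnd ℂ) 2 = 2 := map_ofNat _ 2
  have hxconj : x - (starRingEnd ℂ) x
      = (z - (starRingEnd ℂ) z) * (1 - (((Complex.normSq z)⁻¹ : ℝ) : ℂ)) / 2 := by
    rw [hx, map_div₀, map_add, map_inv₀, h2c, Complex.inv_def, Complex.inv_def,
      Complex.normSq_conj, Complex.conj_conj]
    ring
  rw [hxconj] at hcd2
  have hzz : z - (starRingEnd ℂ) z ≠ 0 := by
    rw [Complex.sub_conj]
    simp only [ne_eq, mul_eq_zero, Complex.I_ne_zero, or_false, Complex.ofReal_eq_zero]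
    intro h
    exact him (by simpa using h)
  have hγ : sqnorm c = 0 := by
    have heq : (z - (starRingEnd ℂ) z) * (2 * ((sqnorm c : ℝ) : ℂ))
        = (z - (starRingEnd ℂ) z) * ((1 - (((Complex.normSq z)⁻¹ : ℝ) : ℂ)) / 2 * ((τ:ℝ):ℂ)) := by
      linear_combination hcd2
    have heq2 : 2 * ((sqnorm c : ℝ) : ℂ)
        = (1 - (((Complex.normSq z)⁻¹ : ℝ) : ℂ)) / 2 * ((τ:ℝ):ℂ) := mul_left_cancel₀ hzz heq
    have heq3 : (2 * sqnorm c : ℝ) = ((1 - (Complex.normSq z)⁻¹) / 2 * τ : ℝ) := by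
      apply Complex.ofReal_inj.mp
      have h2' := heq2
      push_cast at h2' ⊢
      linear_combination h2'
    have hnsqpos : 0 < Complex.normSq z := Complex.normSq_pos.mpr hz
    have hinvpos : 0 < (Complex.normSq z)⁻¹ := inv_pos.mpr hnsqpos
    have hinv : Complex.normSq z * (Complex.normSq z)⁻¹ = 1 := mul_inv_cancel₀ hnsqpos.ne'
    have h1w : 1 ≤ (Complex.normSq z)⁻¹ := by
      nlinarith [hinv, mul_nonneg hinvpos.le (by linarith : (0:ℝ) ≤ 1 - Complex.normSq z)]
    have hτnn : 0 ≤ τ := Finset.sum_nonneg fun k _ => sqnorm_nonneg _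
    have hle : 2 * sqnorm c ≤ 0 := by
      rw [heq3]
      exact mul_nonpos_of_nonpos_of_nonneg (by linarith) hτnn
    linarith [sqnorm_nonneg c]
  have hc0 : c = 0 := sqnorm_eq_zero hγ
  refine descend hS hP x hn ?_ ?_
  · rw [hker, hc0, smul_zero]
  · rw [← hGdef, ← hc, hc0]


omit hS hP

noncomputable def scal (r a : Fin l → ℂ) (Q : Polynomial (Matrix (Fin l) (Fin l) ℝ)) :
    Polynomial ℂ :=
  ∑ i ∈ Q.support, Polynomial.C (r ⬝ᵥ (ec (Q.coeff i) *ᵥ a)) * Polynomial.X ^ i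

lemma scal_coeff (r a : Fin l → ℂ) (Q) (k : ℕ) :
    (scal r a Q).coeff k = r ⬝ᵥ (ec (Q.coeff k) *ᵥ a) := by
  unfold scal
  rw [Polynomial.finset_sum_coeff]
  simp only [Polynomial.coeff_C_mul, Polynomial.coeff_X_pow, mul_ite, mul_one, mul_zero]
  rw [Finset.sum_ite_eq Q.support k (fun i => r ⬝ᵥ (ec (Q.coeff i) *ᵥ a))]
  split
  · rfl
  · rename_i hk
    rw [Polynomial.notMem_support_iff.mp hk]
    simp

lemma scal_eval (r a : Fin l → ℂ) (Q) (z : ℂ) :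
    (scal r a Q).eval z = r ⬝ᵥ (evCM Q z *ᵥ a) := by
  unfold scal evCM
  rw [Polynomial.eval_finset_sum]
  have hsum : ∀ (s : Finset ℕ) (M : ℕ → Matrix (Fin l) (Fin l) ℂ),
      r ⬝ᵥ ((∑ k ∈ s, M k) *ᵥ a) = ∑ k ∈ s, r ⬝ᵥ (M k *ᵥ a) := by
    intro s M
    induction s using Finset.induction with
    | empty => simp
    | insert x' s' hx ih =>
                      rw [Finset.sum_insert hx, Finset.sum_insert hx,
                        Matrix.add_mulVec, dotProduct_add, ih]
  rw [hsum]
  refine Finset.sum_congr rfl fun i _ => ?_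
  rw [Matrix.smul_mulVec, dotProduct_smul, smul_eq_mul, ec_apply,
    Polynomial.eval_mul, Polynomial.eval_C, Polynomial.eval_pow, Polynomial.eval_X]
  ring

lemma scal_derivative (r a : Fin l → ℂ) (Q) :
    scal r a (Polynomial.derivative Q) = Polynomial.derivative (scal r a Q) := by
  ext k
  rw [scal_coeff, Polynomial.coeff_derivative, Polynomial.coeff_derivative, scal_coeff]
  have e1 : Q.coeff (k+1) * ((k : Matrix (Fin l) (Fin l) ℝ) + 1)
      = (k+1 : ℕ) • Q.coeff (k+1) := by
    have e0 : ((k : Matrix (Fin l) (Fin l) ℝ) + 1) = ((k+1 : ℕ) : Matrix (Fin l) (Fin l) ℝ) := by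
      push_cast; ring
    rw [e0, ← (Nat.cast_commute (k+1) (Q.coeff (k+1))).eq, nsmul_eq_mul]
  rw [e1, map_nsmul, Matrix.smul_mulVec, dotProduct_smul, nsmul_eq_mul]
  push_cast
  ring

lemma entry_eval (Q) (z : ℂ) (i j : Fin l) :
    (scal (Pi.single i 1) (Pi.single j 1) Q).eval z = (evCM Q z) i j := by
  rw [scal_eval]
  rw [Matrix.mulVec_single, single_dotProduct]
  simp


lemma key_pow {z : ℂ} (hz : z ≠ 0) {k m : ℕ} (hk : k ≤ m) :
    ((z + z⁻¹)/2)^k * z^m = ((2:ℂ)⁻¹)^k * ((z^2+1)^k * z^(m-k)) := by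
  have h1 : (z + z⁻¹)/2 = (z^2+1) * (2:ℂ)⁻¹ * z⁻¹ := by
    field_simp
  have h2 : (z⁻¹)^k * z^m = z^(m-k) := by
    have e : z ^ m = z ^ k * z ^ (m-k) := by rw [← pow_add]; congr 1; omega
    rw [e, inv_pow, inv_mul_cancel_left₀ (pow_ne_zero _ hz)]
  rw [h1]
  calc ((z^2+1) * (2:ℂ)⁻¹ * z⁻¹)^k * z^m
      = ((2:ℂ)⁻¹)^k * ((z^2+1)^k * ((z⁻¹)^k * z^m)) := by rw [mul_pow, mul_pow]; ring
    _ = _ := by rw [h2]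

lemma evCM_entry_range {Q : Polynomial (Matrix (Fin l) (Fin l) ℝ)} {m : ℕ}
    (hdeg : Q.natDegree < m) (z : ℂ) (i j : Fin l) :
    (evCM Q z) i j = ∑ k ∈ Finset.range m, z^k * (ec (Q.coeff k)) i j := by
  unfold evCM
  rw [Matrix.sum_apply]
  rw [Finset.sum_subset (supp_subset_range hdeg) (fun k _ hk => by
    rw [Polynomial.notMem_support_iff.mp hk]
    simp)]
  refine Finset.sum_congr rfl fun k _ => ?_
  rw [Matrix.smul_apply, smul_eq_mul, ec_apply]

lemma mul_evCM_entry_range (G : Matrix (Fin l) (Fin l) ℂ)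
    {Q : Polynomial (Matrix (Fin l) (Fin l) ℝ)} {m : ℕ}
    (hdeg : Q.natDegree < m) (z : ℂ) (i j : Fin l) :
    (G * evCM Q z) i j = ∑ k ∈ Finset.range m, z^k * (G * ec (Q.coeff k)) i j := by
  unfold evCM
  rw [Finset.mul_sum, Matrix.sum_apply]
  have : ∀ k, (G * (z ^ k • (Q.coeff k).map (fun r : ℝ => (r:ℂ)))) i j
      = z^k * (G * ec (Q.coeff k)) i j := by
    intro k
    rw [mul_smul_comm, Matrix.smul_apply, smul_eq_mul, ec_apply]
  simp only [this]
  rw [Finset.sum_subset (supp_subset_range hdeg) (fun k _ hk => by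
    rw [Polynomial.notMem_support_iff.mp hk]
    simp)]

lemma dot_sum_mulVec (r a : Fin l → ℂ) (s : Finset ℕ) (M : ℕ → Matrix (Fin l) (Fin l) ℂ) :
    r ⬝ᵥ ((∑ k ∈ s, M k) *ᵥ a) = ∑ k ∈ s, r ⬝ᵥ (M k *ᵥ a) := by
  induction s using Finset.induction with
  | empty => simp
  | insert x' s' hx ih =>
                    rw [Finset.sum_insert hx, Finset.sum_insert hx,
                      Matrix.add_mulVec, dotProduct_add, ih]

lemma vecMul_smul_right (x : Fin l → ℂ) (s : ℂ) (M : Matrix (Fin l) (Fin l) ℂ) :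
    x ᵥ* (s • M) = s • (x ᵥ* M) := by
  ext j
  simp only [Matrix.vecMul, dotProduct, Matrix.smul_apply, Pi.smul_apply, smul_eq_mul,
    Finset.mul_sum]
  exact Finset.sum_congr rfl fun i _ => by ring

include hS hP

lemma psi_zero_det {n : ℕ} (hn : 1 ≤ n) {Ψ : Polynomial (Matrix (Fin l) (Fin l) ℝ)}
    (hΨ : ∀ z : ℂ, z ≠ 0 →
      evCM Ψ z = z ^ n •
        (evCM (P n) ((z + z⁻¹) / 2)
          - (2 * z) • (((mPairing S (X * P (n-1)) (P n)).map
                (fun r : ℝ => (r : ℂ)))ᵀ * evCM (P (n-1)) ((z + z⁻¹) / 2)))) :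
    IsUnit (evCM Ψ 0).det := by
  set G : Matrix (Fin l) (Fin l) ℂ := (ec (DD S P (n-1) n))ᵀ with hGdef
  have hG : ((mPairing S (X * P (n-1)) (P n)).map (fun r : ℝ => (r : ℂ)))ᵀ = G := by
    rw [hGdef, ec_apply]; rfl
  have hdeg1 : (P n).natDegree < n + 1 := by
    have := Polynomial.natDegree_le_iff_degree_le.mpr (hP.1 n); omega
  have hdeg2 : (P (n-1)).natDegree < n := by
    have := Polynomial.natDegree_le_iff_degree_le.mpr (hP.1 (n-1)); omega
  have hmain : evCM Ψ 0 = ((2:ℂ)⁻¹)^n • ec (kap P n) := by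
    ext i j
    set J : Polynomial ℂ := (∑ k ∈ Finset.range (n+1),
        Polynomial.C ((ec ((P n).coeff k)) i j * ((2:ℂ)⁻¹)^k)
          * ((Polynomial.X^2+1)^k * Polynomial.X^(n-k)))
      - (∑ k ∈ Finset.range n,
        Polynomial.C (2 * (G * ec ((P (n-1)).coeff k)) i j * ((2:ℂ)⁻¹)^k)
          * ((Polynomial.X^2+1)^k * Polynomial.X^(n+1-k))) with hJ
    have hroot : ∀ z : ℂ, z ≠ 0 →
        ((scal (Pi.single i 1) (Pi.single j 1) Ψ) - J).eval z = 0 := by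
      intro z hz
      rw [Polynomial.eval_sub, sub_eq_zero, entry_eval, hΨ z hz, hG]
      rw [Matrix.smul_apply, Matrix.sub_apply, Matrix.smul_apply, smul_eq_mul, smul_eq_mul]
      rw [evCM_entry_range hdeg1 _ i j, mul_evCM_entry_range G hdeg2 _ i j]
      rw [hJ, Polynomial.eval_sub, Polynomial.eval_finset_sum, Polynomial.eval_finset_sum]
      rw [mul_sub]
      simp only [Finset.mul_sum]
      congr 1
      · refine Finset.sum_congr rfl fun k hk => ?_
        have hkn : k ≤ n := by simp at hk; omega
        simp only [Polynomial.eval_mul, Polynomial.eval_C, Polynomial.eval_pow,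
          Polynomial.eval_add, Polynomial.eval_one, Polynomial.eval_X]
        linear_combination ((ec ((P n).coeff k)) i j) * key_pow hz hkn
      · refine Finset.sum_congr rfl fun k hk => ?_
        have hkn : k ≤ n + 1 := by simp at hk; omega
        simp only [Polynomial.eval_mul, Polynomial.eval_C, Polynomial.eval_pow,
          Polynomial.eval_add, Polynomial.eval_one, Polynomial.eval_X]
        linear_combination (2 * (G * ec ((P (n-1)).coeff k)) i j) * key_pow hz hkn
    have hzero : (scal (Pi.single i 1) (Pi.single j 1) Ψ) - J = 0 := by
      apply Polynomial.eq_zero_of_infinite_isRoot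
      apply Set.Infinite.mono (s := ({(0:ℂ)}ᶜ : Set ℂ))
      · intro z hz
        exact hroot z hz
      · exact (Set.finite_singleton (0:ℂ)).infinite_compl
    have hJ0 : (evCM Ψ 0) i j = J.eval 0 := by
      rw [← entry_eval, ← sub_eq_zero, ← Polynomial.eval_sub, hzero, Polynomial.eval_zero]
    rw [hJ0, hJ, Polynomial.eval_sub, Polynomial.eval_finset_sum, Polynomial.eval_finset_sum]
    have hs1 : ∑ k ∈ Finset.range (n+1),
        (Polynomial.C ((ec ((P n).coeff k)) i j * ((2:ℂ)⁻¹)^k)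
          * ((Polynomial.X^2+1)^k * Polynomial.X^(n-k))).eval 0
        = (ec ((P n).coeff n)) i j * ((2:ℂ)⁻¹)^n := by
      rw [Finset.sum_eq_single n]
      · simp
      · intro k hk hkn
        simp only [Polynomial.eval_mul, Polynomial.eval_C, Polynomial.eval_pow,
          Polynomial.eval_add, Polynomial.eval_one, Polynomial.eval_X]
        have : n - k ≠ 0 := by simp at hk; omega
        rw [zero_pow this]
        ring
      · intro h
        simp at h
    have hs2 : ∑ k ∈ Finset.range n,
        (Polynomial.C (2 * (G * ec ((P (n-1)).coeff k)) i j * ((2:ℂ)⁻¹)^k)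
          * ((Polynomial.X^2+1)^k * Polynomial.X^(n+1-k))).eval 0 = 0 := by
      refine Finset.sum_eq_zero fun k hk => ?_
      simp only [Polynomial.eval_mul, Polynomial.eval_C, Polynomial.eval_pow,
        Polynomial.eval_add, Polynomial.eval_one, Polynomial.eval_X]
      have : n + 1 - k ≠ 0 := by simp at hk; omega
      rw [zero_pow this]
      ring
    rw [hs1, hs2, sub_zero, Matrix.smul_apply, smul_eq_mul]
    unfold kap
    ring
  rw [hmain, Matrix.det_smul]
  refine IsUnit.mul (IsUnit.pow _ ?_) (ec_det_unit (kap_det_unit hP n))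
  simp


lemma part2_core {n : ℕ} (hn : 1 ≤ n) {Ψ : Polynomial (Matrix (Fin l) (Fin l) ℝ)}
    (hΨ : ∀ z : ℂ, z ≠ 0 →
      evCM Ψ z = z ^ n •
        (evCM (P n) ((z + z⁻¹) / 2)
          - (2 * z) • (((mPairing S (X * P (n-1)) (P n)).map
                (fun r : ℝ => (r : ℂ)))ᵀ * evCM (P (n-1)) ((z + z⁻¹) / 2))))
    {t : ℝ} (ht0 : t ≠ 0) (ht1 : t^2 ≤ 1) {a b : Fin l → ℂ}
    (hA : evCM Ψ (t:ℂ) *ᵥ a = 0)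
    (hB : (evCM Ψ (t:ℂ) *ᵥ b) + (evCM (Polynomial.derivative Ψ) (t:ℂ) *ᵥ a) = 0) :
    a = 0 := by
  have hn1 : n - 1 + 1 = n := by omega
  set tz : ℂ := (t : ℂ) with htzdef
  have htz : tz ≠ 0 := by
    rw [htzdef]
    exact_mod_cast Complex.ofReal_ne_zero.mpr ht0
  set xt : ℂ := (tz + tz⁻¹)/2 with hxtdef
  set A' : Matrix (Fin l) (Fin l) ℂ := ec (DD S P (n-1) n) with hA'def
  have hG : ((mPairing S (X * P (n-1)) (P n)).map (fun r : ℝ => (r : ℂ)))ᵀ = A'ᵀ := by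
    rw [hA'def, ec_apply]; rfl
  set w : ℕ → Matrix (Fin l) (Fin l) ℂ := fun k => evCM (P k) xt with hwdef
  have hwfold : ∀ k, evCM (P k) xt = w k := fun _ => rfl
  set v : ℕ → (Fin l → ℂ) := fun k => w k *ᵥ a with hvdef
  have hvfold : ∀ k, w k *ᵥ a = v k := fun _ => rfl
  set c : Fin l → ℂ := A'ᵀ *ᵥ v (n-1) with hcdef
  have hker : v n = (2*tz) • c := by
    have h0 := kernel_relation hS hP hΨ htz hA
    rw [← hxtdef] at h0
    simp only [hwfold, hvfold, ← hA'def, ← hcdef] at h0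
    exact h0
  -- conjugation facts
  have hxtconj : (starRingEnd ℂ) xt = xt := by
    rw [hxtdef, htzdef]
    rw [map_div₀, map_add, map_inv₀, Complex.conj_ofReal, map_ofNat]
  have hwconj : ∀ k, (w k).map (starRingEnd ℂ) = w k := by
    intro k
    rw [← evCM_conj, hxtconj]
  have hwH : ∀ k, (w k)ᴴ = (w k)ᵀ := by
    intro k
    ext i j
    simp only [Matrix.conjTranspose_apply, Matrix.transpose_apply]
    have := congrArg (fun M => M j i) (hwconj k)
    simpa [Matrix.map_apply, Complex.star_def] using this
  have hA'conj : A'.map (starRingEnd ℂ) = A' := by rw [hA'def]; exact ec_conj _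
  have hA'TH : (A'ᵀ)ᴴ = A' := by
    ext i j
    simp only [Matrix.conjTranspose_apply, Matrix.transpose_apply]
    have := congrArg (fun M => M i j) hA'conj
    simpa [Matrix.map_apply, Complex.star_def] using this
  have hstv : ∀ k, star a ᵥ* (w k)ᵀ = star (v k) := by
    intro k
    rw [← hvfold k, Matrix.star_mulVec, hwH]
  have hsc : star c = star (v (n-1)) ᵥ* A' := by
    rw [hcdef, Matrix.star_mulVec, hA'TH]
  have hscw : star c = star a ᵥ* ((w (n-1))ᵀ * A') := by
    rw [hsc, ← hstv, Matrix.vecMul_vecMul]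
  have h2tz : star (2*tz) = 2*tz := by
    rw [Complex.star_def, _root_.map_mul, map_ofNat, htzdef, Complex.conj_ofReal]
  -- row vanishing
  have hcd0 := cd_matrix hS hP xt xt (n-1)
  rw [hn1, sub_self, zero_smul, sub_eq_zero] at hcd0
  simp only [hwfold, ← hA'def] at hcd0
  have hrow_n : star c ᵥ* w n = (2*tz) • (star c ᵥ* (A'ᵀ * w (n-1))) := by
    calc star c ᵥ* w n
        = (star a ᵥ* ((w (n-1))ᵀ * A')) ᵥ* w n := by rw [← hscw]
      _ = star a ᵥ* (((w (n-1))ᵀ * A') * w n) := by rw [Matrix.vecMul_vecMul]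
      _ = star a ᵥ* ((w (n-1))ᵀ * (A' * w n)) := by rw [Matrix.mul_assoc]
      _ = star a ᵥ* ((w n)ᵀ * (A'ᵀ * w (n-1))) := by rw [hcd0]
      _ = (star a ᵥ* (w n)ᵀ) ᵥ* (A'ᵀ * w (n-1)) := by rw [Matrix.vecMul_vecMul]
      _ = star (v n) ᵥ* (A'ᵀ * w (n-1)) := by rw [hstv]
      _ = ((2*tz) • star c) ᵥ* (A'ᵀ * w (n-1)) := by rw [hker, star_smul, h2tz]
      _ = (2*tz) • (star c ᵥ* (A'ᵀ * w (n-1))) := by rw [Matrix.smul_vecMul]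
  have hrowv : star c ᵥ* (evCM Ψ tz) = 0 := by
    have hform := hΨ tz htz
    rw [hG, ← hxtdef] at hform
    simp only [hwfold] at hform
    rw [hform, vecMul_smul_right, Matrix.vecMul_sub, hrow_n, vecMul_smul_right, sub_self,
      smul_zero]
  -- scalar polynomials
  set pF : Polynomial ℂ := scal (star c) a Ψ with hpFdef
  set pH : Polynomial ℂ := scal (star c ᵥ* A'ᵀ) a (P (n-1)) with hpHdef
  set pk : ℕ → Polynomial ℂ := fun k => scal (star (v k)) a (P k) with hpkdef
  have hpF_t : pF.eval tz = 0 := by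
    rw [hpFdef, scal_eval, hA, dotProduct_zero]
  have hpF_d : (Polynomial.derivative pF).eval tz = 0 := by
    rw [hpFdef, ← scal_derivative, scal_eval]
    have hBa : evCM (Polynomial.derivative Ψ) tz *ᵥ a = -(evCM Ψ tz *ᵥ b) := by
      rw [add_comm] at hB
      exact eq_neg_of_add_eq_zero_left hB
    rw [hBa, dotProduct_neg, Matrix.dotProduct_mulVec, hrowv, zero_dotProduct,
      neg_zero]
  have hpH_t : pH.eval xt = ((sqnorm c : ℝ) : ℂ) := by
    rw [hpHdef, scal_eval, hwfold, hvfold, ← Matrix.dotProduct_mulVec, ← hcdef, star_dot_self]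
  have hpk_t : ∀ k, (pk k).eval xt = ((sqnorm (v k) : ℝ) : ℂ) := by
    intro k
    rw [hpkdef]
    simp only
    rw [scal_eval, hwfold, hvfold, star_dot_self]
  -- master identity
  have master : ∀ z : ℂ, z ≠ 0 →
      ((z + z⁻¹)/2 - xt) * (∑ k ∈ Finset.range n, (pk k).eval ((z+z⁻¹)/2))
        = (z^n)⁻¹ * pF.eval z + 2*(z - tz) * pH.eval ((z+z⁻¹)/2) := by
    intro z hz
    have hcdz := cd_matrix hS hP ((z+z⁻¹)/2) xt (n-1)
    rw [hn1] at hcdz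
    simp only [hwfold, ← hA'def] at hcdz
    have hun : evCM (P n) ((z+z⁻¹)/2) *ᵥ a
        = (z^n)⁻¹ • (evCM Ψ z *ᵥ a)
          + (2*z) • (A'ᵀ *ᵥ (evCM (P (n-1)) ((z+z⁻¹)/2) *ᵥ a)) := by
      have h := hΨ z hz
      rw [hG] at h
      rw [h, Matrix.smul_mulVec, smul_smul, inv_mul_cancel₀ (pow_ne_zero n hz), one_smul,
        Matrix.sub_mulVec, Matrix.smul_mulVec, ← Matrix.mulVec_mulVec]
      abel
    have hsand := congrArg (fun M => star a ⬝ᵥ (M *ᵥ a)) hcdz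
    simp only [Matrix.sub_mulVec, dotProduct_sub] at hsand
    have e1 : star a ⬝ᵥ (((w (n-1))ᵀ * (A' * evCM (P n) ((z+z⁻¹)/2))) *ᵥ a)
        = (z^n)⁻¹ * pF.eval z + (2*z) * pH.eval ((z+z⁻¹)/2) := by
      rw [← Matrix.mulVec_mulVec, Matrix.dotProduct_mulVec, hstv, ← Matrix.mulVec_mulVec,
        Matrix.dotProduct_mulVec, ← hsc, hun, dotProduct_add, dotProduct_smul,
        dotProduct_smul, smul_eq_mul, smul_eq_mul]
      congr 1
      · rw [hpFdef, scal_eval]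
      · rw [hpHdef, scal_eval, Matrix.dotProduct_mulVec]
    have e2 : star a ⬝ᵥ (((w n)ᵀ * (A'ᵀ * evCM (P (n-1)) ((z+z⁻¹)/2))) *ᵥ a)
        = (2*tz) * pH.eval ((z+z⁻¹)/2) := by
      rw [← Matrix.mulVec_mulVec, Matrix.dotProduct_mulVec, hstv, hker, star_smul, h2tz,
        smul_dotProduct, smul_eq_mul, ← Matrix.mulVec_mulVec, Matrix.dotProduct_mulVec]
      rw [hpHdef, scal_eval, Matrix.dotProduct_mulVec]
    have e3 : star a ⬝ᵥ ((((z+z⁻¹)/2 - xt) • ∑ k ∈ Finset.range n,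
          (w k)ᵀ * evCM (P k) ((z+z⁻¹)/2)) *ᵥ a)
        = ((z+z⁻¹)/2 - xt) * ∑ k ∈ Finset.range n, (pk k).eval ((z+z⁻¹)/2) := by
      rw [Matrix.smul_mulVec, dotProduct_smul, smul_eq_mul, dot_sum_mulVec]
      congr 1
      refine Finset.sum_congr rfl fun k _ => ?_
      rw [← Matrix.mulVec_mulVec, Matrix.dotProduct_mulVec, hstv, hpkdef]
      simp only
      rw [scal_eval]
    rw [e1, e2, e3] at hsand
    linear_combination -hsand
  -- derivatives
  have hxd : HasDerivAt (fun z : ℂ => (z + z⁻¹)/2) ((1 + -(tz^2)⁻¹)/2) tz :=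
    ((hasDerivAt_id' tz).add (hasDerivAt_inv htz)).div_const 2
  have hcomp : ∀ (p : Polynomial ℂ), HasDerivAt (fun z : ℂ => p.eval ((z+z⁻¹)/2))
      ((Polynomial.derivative p).eval xt * ((1 + -(tz^2)⁻¹)/2)) tz := by
    intro p
    have h0 := (p.hasDerivAt ((tz+tz⁻¹)/2)).comp tz hxd
    exact h0
  have hfd := (hxd.sub_const xt).mul (HasDerivAt.fun_sum
    (fun k (_ : k ∈ Finset.range n) => hcomp (pk k)))
  have hq1 := ((hasDerivAt_pow n tz).inv (pow_ne_zero n htz)).mul (pF.hasDerivAt tz)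
  have hq2 := (((hasDerivAt_id' tz).sub_const tz).const_mul 2).mul (hcomp pH)
  have hgd := hq1.add hq2
  have heq : (fun z : ℂ => ((z + z⁻¹)/2 - xt)
        * (∑ k ∈ Finset.range n, (pk k).eval ((z+z⁻¹)/2)))
      =ᶠ[nhds tz] (fun z : ℂ => (z^n)⁻¹ * pF.eval z + 2*(z - tz) * pH.eval ((z+z⁻¹)/2)) := by
    filter_upwards [IsOpen.mem_nhds isOpen_compl_singleton
      (Set.mem_compl_singleton_iff.mpr htz)] with z hz
    exact master z (Set.mem_compl_singleton_iff.mp hz)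
  have hfd2 := hgd.congr_of_eventuallyEq heq
  have hDeq := hfd.unique hfd2
  -- simplify the derivative equation
  rw [← hxtdef] at hDeq
  rw [hpF_t, hpF_d, hpH_t] at hDeq
  simp only [sub_self, zero_mul, mul_zero, add_zero, zero_add, mul_one] at hDeq
  simp only [hpk_t] at hDeq
  rw [← Complex.ofReal_sum] at hDeq
  rw [htzdef] at hDeq
  have hreal : (1 + -((t:ℝ)^2)⁻¹)/2 * (∑ k ∈ Finset.range n, sqnorm (v k))
      = 2 * sqnorm c := by
    exact_mod_cast hDeq
  have ht2pos : 0 < t^2 := by positivity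
  have hinv : t^2 * (t^2)⁻¹ = 1 := mul_inv_cancel₀ ht2pos.ne'
  have hinvpos : 0 < (t^2)⁻¹ := inv_pos.mpr ht2pos
  have h1w : 1 ≤ (t^2)⁻¹ := by
    nlinarith [hinv, mul_nonneg hinvpos.le (by linarith : (0:ℝ) ≤ 1 - t^2)]
  have hτnn : 0 ≤ ∑ k ∈ Finset.range n, sqnorm (v k) :=
    Finset.sum_nonneg fun k _ => sqnorm_nonneg _
  have hγ : sqnorm c = 0 := by
    have hle : 2 * sqnorm c ≤ 0 := by
      rw [← hreal]
      exact mul_nonpos_of_nonpos_of_nonneg (by linarith) hτnn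
    linarith [sqnorm_nonneg c]
  have hc0 : c = 0 := sqnorm_eq_zero hγ
  refine descend hS hP xt hn ?_ ?_
  · rw [hwfold, hvfold, hker, hc0, smul_zero]
  · rw [hwfold, hvfold, ← hA'def, ← hcdef, hc0]

end Main
end PsiAux

/-- The zeros of `Ψ̂_n` in the closed unit disk lie in `[-1,0)∪(0,1]` and are simple
(in the sense of Newton–Jost). -/
theorem psiHat_invertible_and_simple_zeros
    (l n : ℕ) (hl : 1 ≤ l) (hn : 1 ≤ n)
    (S : ℕ → Matrix (Fin l) (Fin l) ℝ)
    (hSsymm : ∀ j, (S j).IsSymm)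
    (hSpd : HankelPosDef S)
    (P : ℕ → Polynomial (Matrix (Fin l) (Fin l) ℝ))
    (hP : IsMOPS S P)
    (Ψ : Polynomial (Matrix (Fin l) (Fin l) ℝ))
    (hΨdeg : Ψ.degree ≤ (2 * n : ℕ))
    (hΨ : ∀ z : ℂ, z ≠ 0 →
      evCM Ψ z = z ^ n •
        (evCM (P n) ((z + z⁻¹) / 2)
          - (2 * z) • (((mPairing S (Polynomial.X * P (n-1)) (P n)).map
                (fun r : ℝ => (r : ℂ)))ᵀ * evCM (P (n-1)) ((z + z⁻¹) / 2)))) :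
    (∀ z : ℂ, ‖z‖ ≤ 1 →
        (¬ ∃ t : ℝ, t ∈ Set.Icc (-1 : ℝ) 1 ∧ t ≠ 0 ∧ z = (t : ℂ)) →
        (evCM Ψ z).det ≠ 0) ∧
    (∀ t : ℝ, t ∈ Set.Icc (-1 : ℝ) 1 → t ≠ 0 →
      ∀ a b : Fin l → ℂ,
        evCM Ψ (t : ℂ) *ᵥ a = 0 →
        (evCM Ψ (t : ℂ) *ᵥ b) + (evCM (Polynomial.derivative Ψ) (t : ℂ) *ᵥ a) = 0 →
        a = 0) := by
  constructor
  · intro z habs hnotreal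
    by_cases hz0 : z = 0
    · subst hz0
      exact (PsiAux.psi_zero_det hSsymm hP hn hΨ).ne_zero
    · have him : z.im ≠ 0 := by
        intro him0
        apply hnotreal
        refine ⟨z.re, ?_, ?_, ?_⟩
        · have : ‖z‖ = |z.re| := by
            rw [Complex.norm_def, Complex.normSq_apply, him0]
            rw [show z.re * z.re + 0 * 0 = z.re ^ 2 by ring, Real.sqrt_sq_eq_abs]
          rw [this] at habs
          exact Set.mem_Icc.mpr (abs_le.mp habs)
        · intro hre
          exact hz0 (Complex.ext hre him0)
        · exact Complex.ext (by simp) (by simp [him0])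
      have hnsq : Complex.normSq z ≤ 1 := by
        rw [Complex.normSq_eq_norm_sq]
        nlinarith [norm_nonneg z]
      intro hdet
      obtain ⟨v, hv0, hveq⟩ := (Matrix.exists_mulVec_eq_zero_iff).mpr hdet
      exact hv0 (PsiAux.part1_core hSsymm hP hn hΨ him hnsq hveq)
  · intro t hmem ht0 a b hA hB
    have ht1 : t^2 ≤ 1 := by
      rcases Set.mem_Icc.mp hmem with ⟨h1, h2⟩
      nlinarith
    exact PsiAux.part2_core hSsymm hP hn hΨ ht0 ht1 hA hB
end

section
/- Let ω ∈ ℂ[z,w] be a polynomial in two complex variables, and write 𝔻 = {u ∈ ℂ : |u| < 1}, 𝔻̄ = {u : |u| ≤ 1}, 𝕋 = {u : |u| = 1}. (a) Suppose there exist z₀ ∈ 𝔻̄ and a dense subset T̂₂ of 𝕋 such that ω(z₀,w) ≠ 0 for all w ∈ 𝔻̄, and ω(z,w) ≠ 0 for all (z,w) ∈ 𝔻 × T̂₂. Then ω(z,w) ≠ 0 for all (z,w) ∈ 𝔻 × 𝔻. (b) Suppose there exist countable subsets T₁ and T₂ of 𝕋 such that ω(z,w) ≠ 0 for all (z,w)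 ∈ (𝕋∖T₁) × (𝔻̄∖T₂), and ω(z,w) ≠ 0 for all (z,w) ∈ 𝔻 × (𝕋∖T₂). Then ω(z,w) ≠ 0 for all (z,w) ∈ 𝔻 × 𝔻. -/
set_option maxHeartbeats 1000000

open Metric Set

/-- Evaluation of a complex bivariate polynomial (variables `0 ↦ z`, `1 ↦ w`). -/
noncomputable def ev2C (p : MvPolynomial (Fin 2) ℂ) (a b : ℂ) : ℂ :=
  MvPolynomial.eval ![a, b] p

noncomputable def E (B : Polynomial (Polynomial ℂ)) (z w : ℂ) : ℂ :=
  Polynomial.eval₂ (Polynomial.evalRingHom z) w B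

lemma E_right (B : Polynomial (Polynomial ℂ)) (z w : ℂ) :
    E B z w = (B.map (Polynomial.evalRingHom z)).eval w := (Polynomial.eval_map _ _).symm

lemma E_left (B : Polynomial (Polynomial ℂ)) (z w : ℂ) :
    E B z w = (B.eval (Polynomial.C w)).eval z := by
  have := Polynomial.hom_eval₂ B (RingHom.id (Polynomial ℂ)) (Polynomial.evalRingHom z) (Polynomial.C w)
  simp only [RingHom.comp_id, Polynomial.eval_C, Polynomial.coe_evalRingHom] at this
  rw [E, ← this]
  rfl

lemma E_cont (B : Polynomial (Polynomial ℂ)) : Continuous fun p : ℂ × ℂ => E B p.1 p.2 := by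
  have h : (fun p : ℂ × ℂ => E B p.1 p.2) = fun p : ℂ × ℂ =>
      ∑ i ∈ Finset.range (B.natDegree + 1), (B.coeff i).eval p.1 * p.2 ^ i := by
    funext p; rw [E, Polynomial.eval₂_eq_sum_range]; rfl
  rw [h]
  exact continuous_finset_sum _ fun i _ =>
    ((Polynomial.continuous _).comp continuous_fst).mul (continuous_snd.pow i)

lemma E_mul (A B : Polynomial (Polynomial ℂ)) (z w : ℂ) :
    E (A * B) z w = E A z w * E B z w := Polynomial.eval₂_mul _ _

lemma E_lin (c z w : ℂ) (B : Polynomial (Polynomial ℂ)) :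
    E ((Polynomial.X - Polynomial.C (Polynomial.C c)) * B) z w = (w - c) * E B z w := by
  rw [E_mul]; congr 1; simp [E]

noncomputable def toB (ω : MvPolynomial (Fin 2) ℂ) : Polynomial (Polynomial ℂ) :=
  MvPolynomial.eval₂ (Polynomial.C.comp Polynomial.C)
    ![Polynomial.C Polynomial.X, Polynomial.X] ω

lemma E_toB (ω : MvPolynomial (Fin 2) ℂ) (z w : ℂ) : E (toB ω) z w = ev2C ω z w := by
  induction ω using MvPolynomial.induction_on with
  | C a => simp [toB, ev2C, E]
  | add p q hp hq => simp [toB, ev2C, E, MvPolynomial.eval₂_add, Polynomial.eval₂_add, map_add] at hp hq ⊢; rw [hp, hq]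
  | mul_X p i h =>
      rw [toB, MvPolynomial.eval₂_mul, ev2C, map_mul]
      rw [toB, ev2C] at h
      unfold E at h ⊢
      simp only [Polynomial.eval₂_mul]
      rw [h]
      congr 1
      fin_cases i <;> simp

lemma hurwitz (f : ℂ → ℂ → ℂ) (hf : Continuous fun p : ℂ × ℂ => f p.1 p.2)
    (hpoly : ∀ u : ℂ, ∃ P : Polynomial ℂ, ∀ x, f x u = P.eval x)
    (a b : ℂ) (hab : f a b = 0) (hnz : ∃ x, f x b ≠ 0)
    {ε : ℝ} (hε : 0 < ε) :
    ∃ δ > 0, ∀ u, dist u b < δ → ∃ x, dist x a < ε ∧ f x u = 0 := by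
  obtain ⟨P, hP⟩ := hpoly b
  have hPne : P ≠ 0 := by
    rintro rfl; obtain ⟨x, hx⟩ := hnz; exact hx (by simp [hP x])
  have hroots : {x | P.IsRoot x}.Finite := Polynomial.finite_setOf_isRoot hPne
  have hinf : (Set.Ioo (0:ℝ) ε).Infinite := Set.Ioo_infinite hε
  obtain ⟨r, ⟨hr0, hrε⟩, hrD⟩ :=
    (hinf.diff (hroots.image (fun x => dist x a))).nonempty
  have hsph : ∀ x ∈ sphere a r, f x b ≠ 0 := by
    intro x hx hfx
    exact hrD ⟨x, by rw [hP] at hfx; exact hfx, by rwa [mem_sphere] at hx⟩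
  have hcs : IsCompact (sphere a r) := isCompact_sphere a r
  have hns : (sphere a r).Nonempty := NormedSpace.sphere_nonempty.2 hr0.le
  have hcont1 : Continuous fun x : ℂ => ‖f x b‖ :=
    (hf.comp (continuous_id.prodMk (continuous_const : Continuous fun _ : ℂ => b))).norm
  obtain ⟨x₀, hx₀s, hx₀m⟩ := hcs.exists_isMinOn hns hcont1.continuousOn
  set m := ‖f x₀ b‖ with hm
  have hmpos : 0 < m := norm_pos_iff.2 (hsph x₀ hx₀s)
  have hopen : IsOpen {p : ℂ × ℂ | ‖f p.1 p.2 - f p.1 b‖ < m/2} := by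
    have : Continuous fun p : ℂ × ℂ => ‖f p.1 p.2 - f p.1 b‖ :=
      (hf.sub (hf.comp (continuous_fst.prodMk continuous_const))).norm
    exact isOpen_lt this continuous_const
  obtain ⟨U, V, hU, hV, hsU, hbV, hUV⟩ := generalized_tube_lemma hcs (isCompact_singleton : IsCompact {b}) hopen
    (by intro p hp
        rw [Set.mem_prod, mem_singleton_iff] at hp
        show ‖f p.1 p.2 - f p.1 b‖ < m/2
        rw [hp.2]
        simpa using half_pos hmpos)
  obtain ⟨δ₁, hδ₁, hδ₁s⟩ := Metric.isOpen_iff.1 hV b (hbV rfl)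
  have hc2 : Continuous fun u => f a u := hf.comp (continuous_const.prodMk continuous_id)
  obtain ⟨δ₂, hδ₂, hδ₂s⟩ := Metric.continuous_iff.1 hc2 b (m/2) (half_pos hmpos)
  refine ⟨min δ₁ δ₂, lt_min hδ₁ hδ₂, fun u hu => ?_⟩
  by_contra hcon
  push_neg at hcon
  obtain ⟨Q, hQ⟩ := hpoly u
  have hball : ∀ x ∈ closedBall a r, f x u ≠ 0 := fun x hx =>
    hcon x (lt_of_le_of_lt (mem_closedBall.1 hx) hrε)
  have hlow : ∀ x ∈ sphere a r, m/2 ≤ ‖f x u‖ := by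
    intro x hx
    have hxu : (x, u) ∈ U ×ˢ V :=
      Set.mem_prod.2 ⟨hsU hx, hδ₁s (mem_ball.2 (lt_of_lt_of_le hu (min_le_left _ _)))⟩
    have h1 : ‖f x u - f x b‖ < m/2 := hUV hxu
    have h2 : m ≤ ‖f x b‖ := hx₀m hx
    have h3 : ‖f x b‖ - ‖f x u - f x b‖ ≤ ‖f x u‖ := by
      have := norm_sub_norm_le (f x b) (f x b - f x u)
      simp only [sub_sub_cancel] at this
      calc ‖f x b‖ - ‖f x u - f x b‖ = ‖f x b‖ - ‖f x b - f x u‖ := by rw [norm_sub_rev]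
        _ ≤ ‖f x u‖ := this
    linarith
  set g : ℂ → ℂ := fun x => (f x u)⁻¹ with hg
  have hfu_eq : (fun x => f x u) = fun x => Q.eval x := funext hQ
  have hd : DiffContOnCl ℂ g (ball a r) := by
    have hgd : DifferentiableOn ℂ g (closedBall a r) := by
      intro x hx
      have hdx : DifferentiableAt ℂ (fun x => f x u) x := by
        rw [hfu_eq]; exact (Q.differentiable).differentiableAt
      exact (hdx.inv (hball x hx)).differentiableWithinAt
    exact ⟨hgd.mono ball_subset_closedBall,
      by rw [closure_ball a hr0.ne']; exact hgd.continuousOn⟩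
  have hbound : ‖g a‖ ≤ (m/2)⁻¹ := by
    apply Complex.norm_le_of_forall_mem_frontier_norm_le isBounded_ball hd
    · intro x hx
      rw [frontier_ball a hr0.ne'] at hx
      rw [hg]
      simp only [norm_inv]
      exact inv_anti₀ (half_pos hmpos) (hlow x hx)
    · rw [closure_ball a hr0.ne']; exact mem_closedBall_self hr0.le
  have hfa : ‖f a u‖ < m/2 := by
    have := hδ₂s u (lt_of_lt_of_le hu (min_le_right _ _))
    rwa [dist_eq_norm, hab, sub_zero] at this
  have hfa0 : f a u ≠ 0 := hcon a (by simpa using hε)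
  rw [hg] at hbound
  simp only [norm_inv] at hbound
  have : m/2 ≤ ‖f a u‖ := by
    have h := (inv_le_inv₀ (norm_pos_iff.2 hfa0) (half_pos hmpos)).1 hbound
    exact h
  linarith

lemma sphere_inter_not_countable {x : ℂ} (hx : x ∈ sphere (0:ℂ) 1) {V : Set ℂ}
    (hV : V ∈ nhds x) : ¬ (V ∩ sphere (0:ℂ) 1).Countable := by
  intro hc
  obtain ⟨t₀, ht₀⟩ : ∃ t, circleMap 0 1 t = x := by
    have h : x ∈ Set.range (circleMap 0 1) := by
      rw [range_circleMap]; simpa using hx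
    exact h
  have hpre : (circleMap 0 1 ⁻¹' (V ∩ sphere 0 1)).Countable :=
    hc.preimage_circleMap 0 one_ne_zero
  have hVp : circleMap 0 1 ⁻¹' V ∈ nhds t₀ :=
    (continuous_circleMap 0 1).continuousAt (by rwa [ht₀])
  obtain ⟨ε, hε, hεs⟩ := Metric.mem_nhds_iff.1 hVp
  have hsub : Set.Ioo (t₀ - ε/2) (t₀ + ε/2) ⊆ circleMap 0 1 ⁻¹' (V ∩ sphere 0 1) := by
    intro t ht
    refine ⟨hεs ?_, by simpa using circleMap_mem_sphere (0:ℂ) zero_le_one t⟩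
    rw [mem_ball, Real.dist_eq, abs_lt]
    obtain ⟨h1, h2⟩ := ht
    constructor <;> linarith
  have hcnt : (Set.Ioo (t₀ - ε/2) (t₀ + ε/2)).Countable := hpre.mono hsub
  have hlt : t₀ - ε/2 < t₀ + ε/2 := by linarith
  rw [← Cardinal.le_aleph0_iff_set_countable, Cardinal.mk_Ioo_real hlt] at hcnt
  exact Cardinal.aleph0_lt_continuum.not_ge hcnt

lemma exists_sphere_avoid (S : Set ℂ) (hS : S.Countable) :
    ∃ x ∈ sphere (0:ℂ) 1, x ∉ S := by
  by_contra h
  push_neg at h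
  refine sphere_inter_not_countable (show (1:ℂ) ∈ sphere (0:ℂ) 1 by simp)
    (Filter.univ_mem) (hS.mono ?_)
  intro y hy
  exact h y hy.2

lemma dense_sphere_diff (S : Set ℂ) (hS : S.Countable) :
    sphere (0:ℂ) 1 ⊆ closure (sphere (0:ℂ) 1 \ S) := by
  intro x hx
  rw [mem_closure_iff_nhds]
  intro V hV
  by_contra h
  apply sphere_inter_not_countable hx hV
  apply hS.mono
  intro y hy
  by_contra hyS
  exact h ⟨y, hy.1, hy.2, hyS⟩

lemma abs_lt_one_of_dist {x z : ℂ} (hxd : dist x z < 1 - ‖z‖) :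
    ‖x‖ < 1 := by
  have h := dist_triangle x z 0
  have e1 : dist x 0 = ‖x‖ := by simp [Complex.dist_eq]
  have e2 : dist z 0 = ‖z‖ := by simp [Complex.dist_eq]
  rw [e1, e2] at h
  linarith

lemma partA (B : Polynomial (Polynomial ℂ)) (z₀ : ℂ) (T : Set ℂ)
    (hz₀ : ‖z₀‖ ≤ 1) (hT : T ⊆ sphere (0:ℂ) 1)
    (hTd : sphere (0:ℂ) 1 ⊆ closure T)
    (h1 : ∀ w, ‖w‖ ≤ 1 → E B z₀ w ≠ 0)
    (h2 : ∀ z w, ‖z‖ < 1 → w ∈ T → E B z w ≠ 0) :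
    ∀ z w, ‖z‖ < 1 → ‖w‖ ≤ 1 → E B z w ≠ 0 := by
  obtain ⟨t₀, ht₀⟩ : T.Nonempty := by
    rw [← closure_nonempty_iff]
    exact ⟨1, hTd (by simp)⟩
  -- Step 2 : no zeros on 𝔻 × 𝕋
  have step2 : ∀ z w, ‖z‖ < 1 → ‖w‖ = 1 → E B z w ≠ 0 := by
    intro z w hz hw h0
    have hnz : ∃ x, E B x w ≠ 0 := ⟨z₀, h1 w (le_of_eq hw)⟩
    have hε : (0:ℝ) < 1 - ‖z‖ := by linarith
    obtain ⟨δ, hδ, hδs⟩ := hurwitz (fun x u => E B x u) (E_cont B)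
      (fun u => ⟨B.eval (Polynomial.C u), fun x => E_left B x u⟩) z w h0 hnz hε
    have hwsph : w ∈ sphere (0:ℂ) 1 := by
      rw [mem_sphere_zero_iff_norm]; exact hw
    obtain ⟨t, htT, htd⟩ := Metric.mem_closure_iff.1 (hTd hwsph) δ hδ
    obtain ⟨x, hxd, hx0⟩ := hδs t (by rwa [dist_comm])
    exact h2 x t (abs_lt_one_of_dist hxd) htT hx0
  have step_t0 : ∀ z, ‖z‖ < 1 → E B z t₀ ≠ 0 := fun z hz => h2 z t₀ hz ht₀
  -- the set U of parameters with no zeros in the closed disk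
  set U : Set ℂ := {z | ∀ w, ‖w‖ ≤ 1 → E B z w ≠ 0} with hU
  have hopenO : IsOpen {p : ℂ × ℂ | E B p.1 p.2 ≠ 0} := by
    have h := (isClosed_eq (E_cont B) (continuous_const : Continuous fun _ : ℂ × ℂ => (0:ℂ))).isOpen_compl
    exact h
  have hnbhd : ∀ z ∈ U, ∃ u : Set ℂ, IsOpen u ∧ z ∈ u ∧ u ⊆ U := by
    intro z hz
    obtain ⟨u, v, hu, hv, hzu, hcv, huv⟩ := generalized_tube_lemma
      (isCompact_singleton : IsCompact {z}) (isCompact_closedBall (0:ℂ) 1) hopenO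
      (by
        intro p hp
        rw [Set.mem_prod, mem_singleton_iff] at hp
        have := hz p.2 (by
          have := hp.2; rwa [mem_closedBall_zero_iff] at this)
        simp only [mem_setOf_eq, hp.1]
        exact this)
    refine ⟨u, hu, hzu rfl, fun z' hz' => ?_⟩
    intro w hw
    have hmem : (z', w) ∈ u ×ˢ v :=
      Set.mem_prod.2 ⟨hz', hcv (by rwa [mem_closedBall_zero_iff])⟩
    exact huv hmem
  have hUopen : IsOpen U := by
    rw [isOpen_iff_forall_mem_open]
    intro z hz
    obtain ⟨u, hu, hzu, huU⟩ := hnbhd z hz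
    exact ⟨u, huU, hu, hzu⟩
  have hcl : ∀ z, ‖z‖ < 1 → z ∈ closure U → z ∈ U := by
    intro z hz hzc w hw h0
    have hwlt : ‖w‖ < 1 := lt_of_le_of_ne hw (fun h => step2 z w hz h h0)
    have hnz : ∃ x, E B z x ≠ 0 := ⟨t₀, step_t0 z hz⟩
    have hε : (0:ℝ) < 1 - ‖w‖ := by linarith
    obtain ⟨δ, hδ, hδs⟩ := hurwitz (fun x u => E B u x)
      ((E_cont B).comp (continuous_snd.prodMk continuous_fst))
      (fun u => ⟨B.map (Polynomial.evalRingHom u), fun x => E_right B u x⟩) w z h0 hnz hε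
    obtain ⟨z', hz'U, hz'd⟩ := Metric.mem_closure_iff.1 hzc δ hδ
    obtain ⟨x, hxd, hx0⟩ := hδs z' (by rwa [dist_comm])
    exact hz'U x (le_of_lt (abs_lt_one_of_dist hxd)) hx0
  have hU0 : (ball (0:ℂ) 1 ∩ U).Nonempty := by
    rcases lt_or_eq_of_le hz₀ with h | h
    · exact ⟨z₀, by rwa [mem_ball_zero_iff], h1⟩
    · obtain ⟨u, hu, hzu, huU⟩ := hnbhd z₀ h1
      obtain ⟨η, hη, hηs⟩ := Metric.isOpen_iff.1 hu z₀ hzu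
      set η' := min η 1 with hη'
      have hη'0 : 0 < η' := lt_min hη one_pos
      have hη'1 : η' ≤ 1 := min_le_right _ _
      refine ⟨((1 - η'/2 : ℝ) : ℂ) * z₀, ?_, huU (hηs ?_)⟩
      · rw [mem_ball_zero_iff, norm_mul, Complex.norm_real, Real.norm_eq_abs,
            abs_of_nonneg (by linarith : (0:ℝ) ≤ 1 - η'/2), h]
        linarith
      · rw [mem_ball]
        have heq : dist (((1 - η'/2 : ℝ) : ℂ) * z₀) z₀ = η'/2 * ‖z₀‖ := by
          rw [Complex.dist_eq]
          have e3 : ((1 - η'/2 : ℝ) : ℂ) * z₀ - z₀ = ((-(η'/2) : ℝ) : ℂ) * z₀ := by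
            push_cast; ring
          rw [e3, norm_mul, Complex.norm_real, Real.norm_eq_abs]
          congr 1
          rw [abs_of_nonpos (by linarith : -(η'/2) ≤ 0)]
          ring
        rw [heq, h]
        have := min_le_left η 1
        simp only [hη'] at *
        linarith
  have hconn : IsPreconnected (ball (0:ℂ) 1) := (convex_ball (0:ℂ) 1).isPreconnected
  have hsub : ball (0:ℂ) 1 ⊆ U := by
    by_contra hns
    have hv : (ball (0:ℂ) 1 ∩ (closure U)ᶜ).Nonempty := by
      obtain ⟨z, hzb, hzU⟩ := not_subset.1 hns
      refine ⟨z, hzb, fun hzc => hzU (hcl z (by rwa [mem_ball_zero_iff] at hzb) hzc)⟩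
    have hcover : ball (0:ℂ) 1 ⊆ U ∪ (closure U)ᶜ := by
      intro z hzb
      by_cases h : z ∈ closure U
      · exact Or.inl (hcl z (by rwa [mem_ball_zero_iff] at hzb) h)
      · exact Or.inr h
    obtain ⟨z, _, hzU, hzc⟩ := hconn U (closure U)ᶜ hUopen (isClosed_closure.isOpen_compl)
      hcover hU0 hv
    exact hzc (subset_closure hzU)
  intro z w hz hw
  exact hsub (by rwa [mem_ball_zero_iff]) w hw

lemma abs_eq_one_of_sphere {x : ℂ} (hx : x ∈ sphere (0:ℂ) 1) : ‖x‖ = 1 := by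
  rwa [mem_sphere_zero_iff_norm] at hx

lemma partB : ∀ (n : ℕ) (B : Polynomial (Polynomial ℂ)), B.natDegree ≤ n →
    ∀ T₁ T₂ : Set ℂ, T₁ ⊆ sphere (0:ℂ) 1 → T₂ ⊆ sphere (0:ℂ) 1 →
    T₁.Countable → T₂.Countable →
    (∀ z w : ℂ, ‖z‖ = 1 → z ∉ T₁ → ‖w‖ ≤ 1 → w ∉ T₂ →
      E B z w ≠ 0) →
    (∀ z w : ℂ, ‖z‖ < 1 → ‖w‖ = 1 → w ∉ T₂ → E B z w ≠ 0) →
    ∀ z w : ℂ, ‖z‖ < 1 → ‖w‖ < 1 → E B z w ≠ 0 := by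
  intro n
  induction n using Nat.strong_induction_on with
  | _ n IH =>
    intro B hdeg T₁ T₂ hT₁s hT₂s hT₁c hT₂c hyp1 hyp2
    obtain ⟨wex, hwex_sph, hwexT₂⟩ := exists_sphere_avoid T₂ hT₂c
    have hwex1 : ‖wex‖ = 1 := abs_eq_one_of_sphere hwex_sph
    have hB0 : B ≠ 0 := by
      rintro rfl
      exact hyp2 0 wex (by simp) hwex1 hwexT₂ (by simp [E])
    by_cases hw₀ : ∃ w₀ ∈ T₂, B.eval (Polynomial.C w₀) = 0
    · obtain ⟨w₀, hw₀T, hw₀e⟩ := hw₀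
      have hw₀1 : ‖w₀‖ = 1 := abs_eq_one_of_sphere (hT₂s hw₀T)
      have hdvd : (Polynomial.X - Polynomial.C (Polynomial.C w₀)) ∣ B :=
        Polynomial.dvd_iff_isRoot.2 hw₀e
      obtain ⟨B', hB'⟩ := hdvd
      have hB'0 : B' ≠ 0 := by rintro rfl; rw [mul_zero] at hB'; exact hB0 hB'
      have hXC : (Polynomial.X - Polynomial.C (Polynomial.C w₀) :
          Polynomial (Polynomial ℂ)) ≠ 0 := Polynomial.X_sub_C_ne_zero _
      have hdegeq : B.natDegree = 1 + B'.natDegree := by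
        rw [hB', Polynomial.natDegree_mul hXC hB'0, Polynomial.natDegree_X_sub_C]
      have hdeg' : B'.natDegree < n := by omega
      have hfac : ∀ z w : ℂ, E B z w = (w - w₀) * E B' z w := by
        intro z w; rw [hB', E_lin]
      have trans1 : ∀ z w : ℂ, ‖z‖ = 1 → z ∉ T₁ → ‖w‖ ≤ 1 →
          w ∉ T₂ → E B' z w ≠ 0 := by
        intro z w h1 h2 h3 h4 h5
        apply hyp1 z w h1 h2 h3 h4
        rw [hfac, h5, mul_zero]
      have trans2 : ∀ z w : ℂ, ‖z‖ < 1 → ‖w‖ = 1 → w ∉ T₂ →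
          E B' z w ≠ 0 := by
        intro z w h1 h2 h3 h4
        apply hyp2 z w h1 h2 h3
        rw [hfac, h4, mul_zero]
      intro z w hz hw
      rw [hfac]
      have hwne : w - w₀ ≠ 0 := by
        intro h
        rw [sub_eq_zero] at h
        rw [h, hw₀1] at hw
        exact lt_irrefl 1 hw
      exact mul_ne_zero hwne
        (IH B'.natDegree hdeg' B' le_rfl T₁ T₂ hT₁s hT₂s hT₁c hT₂c trans1 trans2 z w hz hw)
    · push_neg at hw₀
      set Z : Set ℂ := ⋃ w₀ ∈ T₂, {z : ℂ | (B.eval (Polynomial.C w₀)).eval z = 0} with hZ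
      have hZc : Z.Countable :=
        hT₂c.biUnion fun w₀ hw => (Polynomial.finite_setOf_isRoot (hw₀ w₀ hw)).countable
      obtain ⟨z₀, hz₀sph, hz₀n⟩ := exists_sphere_avoid (T₁ ∪ Z) (hT₁c.union hZc)
      have hz₀1 : ‖z₀‖ = 1 := abs_eq_one_of_sphere hz₀sph
      have hmain := partA B z₀ (sphere (0:ℂ) 1 \ T₂) (le_of_eq hz₀1) diff_subset
        (dense_sphere_diff T₂ hT₂c) ?_ ?_
      · intro z w hz hw
        exact hmain z w hz (le_of_lt hw)
      · intro w hw
        by_cases hwT : w ∈ T₂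
        · intro h0
          rw [E_left] at h0
          exact hz₀n (Or.inr (mem_biUnion hwT h0))
        · exact hyp1 z₀ w hz₀1 (fun h => hz₀n (Or.inl h)) hw hwT
      · intro z w hzlt hwmem
        exact hyp2 z w hzlt (abs_eq_one_of_sphere hwmem.1) hwmem.2

/-- Lemma 4.13: stability criteria for bivariate polynomials on the open bidisk. -/
theorem stability_criterion (ω : MvPolynomial (Fin 2) ℂ) :
    -- (a)
    (∀ (z₀ : ℂ) (T : Set ℂ),
      ‖z₀‖ ≤ 1 →
      T ⊆ Metric.sphere (0 : ℂ) 1 →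
      Metric.sphere (0 : ℂ) 1 ⊆ closure T →
      (∀ w : ℂ, ‖w‖ ≤ 1 → ev2C ω z₀ w ≠ 0) →
      (∀ z w : ℂ, ‖z‖ < 1 → w ∈ T → ev2C ω z w ≠ 0) →
      ∀ z w : ℂ, ‖z‖ < 1 → ‖w‖ < 1 → ev2C ω z w ≠ 0) ∧
    -- (b)
    (∀ T₁ T₂ : Set ℂ,
      T₁ ⊆ Metric.sphere (0 : ℂ) 1 → T₂ ⊆ Metric.sphere (0 : ℂ) 1 →
      T₁.Countable → T₂.Countable →
      (∀ z w : ℂ, ‖z‖ = 1 → z ∉ T₁ → ‖w‖ ≤ 1 → w ∉ T₂ →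
        ev2C ω z w ≠ 0) →
      (∀ z w : ℂ, ‖z‖ < 1 → ‖w‖ = 1 → w ∉ T₂ →
        ev2C ω z w ≠ 0) →
      ∀ z w : ℂ, ‖z‖ < 1 → ‖w‖ < 1 → ev2C ω z w ≠ 0) := by
  constructor
  · intro z₀ T hz₀ hT hTd h1 h2 z w hz hw
    have h := partA (toB ω) z₀ T hz₀ hT hTd
      (fun w hw => by rw [E_toB]; exact h1 w hw)
      (fun z w hz hwT => by rw [E_toB]; exact h2 z w hz hwT)
      z w hz (le_of_lt hw)
    rwa [E_toB] at h
  · intro T₁ T₂ h1 h2 h3 h4 h5 h6 z w hz hw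
    have h := partB (toB ω).natDegree (toB ω) le_rfl T₁ T₂ h1 h2 h3 h4
      (fun z w a b c d => by rw [E_toB]; exact h5 z w a b c d)
      (fun z w a b c => by rw [E_toB]; exact h6 z w a b c)
      z w hz hw
    rwa [E_toB] at h
end

section
/- Let ξ ∈ ℝ[z,w] be a bivariate polynomial with real coefficients that is irreducible in the polynomial ring ℝ[z,w] and has positive degree in z and positive degree in w. Suppose there exist an integer k ≥ 1 and c ∈ ℝ such that ξ(z,w) = c·z^k·ξ(1/z,w) for all z ∈ ℂ∖{0} and all w ∈ ℂ. Then c = 1, k is even, and there exists a point (z₀,w₀) ∈ ℂ² with |z₀| < 1, |w₀| < 1, and ξ(z₀,w₀) = 0. -/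
open Polynomial Complex

noncomputable section

/-- Evaluation of a real bivariate polynomial (variables `0 ↦ z`, `1 ↦ w`) at complex points. -/
noncomputable def ev2 (p : MvPolynomial (Fin 2) ℝ) (a b : ℂ) : ℂ :=
  MvPolynomial.aeval ![a, b] p

namespace SRaux

/-! ### generic evaluation bridges -/

lemma mv_aeval_eq_eval {R : Type*} [CommSemiring R] (x : Fin 2 → R) (p : MvPolynomial (Fin 2) R) :
    MvPolynomial.aeval x p = MvPolynomial.eval x p := by
  rw [MvPolynomial.aeval_def, Algebra.algebraMap_self, MvPolynomial.eval₂_id]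

lemma eval_aevalX {R : Type*} [CommSemiring R] (f : R[X]) (x : Fin 2 → R) (i : Fin 2) :
    MvPolynomial.eval x (Polynomial.aeval (MvPolynomial.X i) f) = f.eval (x i) := by
  rw [← mv_aeval_eq_eval,
    ← Polynomial.aeval_algHom_apply (MvPolynomial.aeval x) (MvPolynomial.X i) f,
    MvPolynomial.aeval_X]
  exact congrFun (Polynomial.coe_aeval_eq_eval (x i)) f

lemma eval_aeval (σ : Fin 2 → MvPolynomial (Fin 2) ℂ) (Φ : MvPolynomial (Fin 2) ℂ)
    (x : Fin 2 → ℂ) :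
    MvPolynomial.eval x (MvPolynomial.aeval σ Φ)
      = MvPolynomial.eval (fun i => MvPolynomial.eval x (σ i)) Φ := by
  have h := MvPolynomial.comp_aeval (f := σ) (φ := (MvPolynomial.aeval x :
    MvPolynomial (Fin 2) ℂ →ₐ[ℂ] ℂ))
  have h2 := congrArg (fun F => (F : MvPolynomial (Fin 2) ℂ →ₐ[ℂ] ℂ) Φ) h
  simp only [AlgHom.comp_apply] at h2
  have h3 : (fun i => MvPolynomial.aeval x (σ i)) = fun i => MvPolynomial.eval x (σ i) := by
    funext i; exact mv_aeval_eq_eval x (σ i)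
  rw [← mv_aeval_eq_eval, h2, h3, mv_aeval_eq_eval]

lemma eval_aeval_poly (σ : Fin 2 → ℂ[X]) (Φ : MvPolynomial (Fin 2) ℂ) (t : ℂ) :
    (MvPolynomial.aeval σ Φ).eval t
      = MvPolynomial.eval (fun i => (σ i).eval t) Φ := by
  have h := MvPolynomial.comp_aeval (f := σ) (φ := (Polynomial.aeval t : ℂ[X] →ₐ[ℂ] ℂ))
  have h2 := congrArg (fun F => (F : MvPolynomial (Fin 2) ℂ →ₐ[ℂ] ℂ) Φ) h
  simp only [AlgHom.comp_apply] at h2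
  have h3 : (fun i => Polynomial.aeval t (σ i)) = fun i => (σ i).eval t := by
    funext i; exact congrFun (Polynomial.coe_aeval_eq_eval t) (σ i)
  rw [← congrFun (Polynomial.coe_aeval_eq_eval t) (MvPolynomial.aeval σ Φ), h2, h3,
    mv_aeval_eq_eval]

/-! ### ev2 bridges -/

lemma ev2_conj (ξ : MvPolynomial (Fin 2) ℝ) (z w : ℂ) :
    (starRingEnd ℂ) (ev2 ξ z w) = ev2 ξ ((starRingEnd ℂ) z) ((starRingEnd ℂ) w) := by
  have h : (Complex.conjAe.toAlgHom.comp (MvPolynomial.aeval ![z, w]) :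
      MvPolynomial (Fin 2) ℝ →ₐ[ℝ] ℂ) =
      MvPolynomial.aeval ![(starRingEnd ℂ) z, (starRingEnd ℂ) w] := by
    rw [MvPolynomial.comp_aeval]
    congr 1
    funext i
    fin_cases i <;> simp
  have := congrArg (fun f => (f : MvPolynomial (Fin 2) ℝ →ₐ[ℝ] ℂ) ξ) h
  simpa [ev2] using this

lemma ev2_ofReal (ξ : MvPolynomial (Fin 2) ℝ) (a b : ℝ) :
    ev2 ξ (a : ℂ) (b : ℂ) = ((MvPolynomial.eval ![a, b] ξ : ℝ) : ℂ) := by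
  have h : ((Algebra.ofId ℝ ℂ).comp (MvPolynomial.aeval ![a, b]) :
      MvPolynomial (Fin 2) ℝ →ₐ[ℝ] ℂ) =
      MvPolynomial.aeval ![(a : ℂ), (b : ℂ)] := by
    rw [MvPolynomial.comp_aeval]
    congr 1
    funext i
    fin_cases i <;> simp [Algebra.ofId_apply]
  have := congrArg (fun f => (f : MvPolynomial (Fin 2) ℝ →ₐ[ℝ] ℂ) ξ) h
  simp only [AlgHom.comp_apply] at this
  have h2 : MvPolynomial.eval ![a, b] ξ = MvPolynomial.aeval ![a, b] ξ := by
    rw [← MvPolynomial.coe_aeval_eq_eval]; rfl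
  rw [ev2, ← this, h2, Algebra.ofId_apply, Complex.coe_algebraMap]

/-! ### reflect lemmas -/

lemma reflect_sub {R : Type*} [CommRing R] (N : ℕ) (f g : R[X]) :
    reflect N (f - g) = reflect N f - reflect N g := by
  ext i
  simp [coeff_reflect, coeff_sub]

lemma natDegree_reflect_le {R : Type*} [CommRing R] {N : ℕ} {f : R[X]} (hf : f.natDegree ≤ N) :
    (reflect N f).natDegree ≤ N := by
  apply Polynomial.natDegree_le_iff_coeff_eq_zero.mpr
  intro i hi
  rw [coeff_reflect, revAt_eq_self_of_lt hi]
  exact Polynomial.coeff_eq_zero_of_natDegree_lt (lt_of_le_of_lt hf hi)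

lemma eval_reflect {K : Type*} [Field K] (N : ℕ) (f : K[X]) (hf : f.natDegree ≤ N) {z : K}
    (hz : z ≠ 0) : (reflect N f).eval z = z ^ N * f.eval z⁻¹ := by
  have h1 : (reflect N f).eval z = ∑ i ∈ Finset.range (N+1), f.coeff (N - i) * z ^ i := by
    rw [Polynomial.eval_eq_sum_range' (Nat.lt_succ_of_le (natDegree_reflect_le hf))]
    refine Finset.sum_congr rfl fun i hi => ?_
    rw [Finset.mem_range, Nat.lt_succ_iff] at hi
    rw [coeff_reflect, revAt_le hi]
  have h2 : z ^ N * f.eval z⁻¹ = ∑ i ∈ Finset.range (N+1), f.coeff i * z ^ (N - i) := by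
    rw [Polynomial.eval_eq_sum_range' (Nat.lt_succ_of_le hf), Finset.mul_sum]
    refine Finset.sum_congr rfl fun i hi => ?_
    rw [Finset.mem_range, Nat.lt_succ_iff] at hi
    have hzi : z ^ N = z ^ (N - i) * z ^ i := (pow_sub_mul_pow z hi).symm
    rw [inv_pow, hzi]
    field_simp
  rw [h1, h2, ← Finset.sum_range_reflect (fun i => f.coeff i * z ^ (N - i)) (N+1)]
  refine Finset.sum_congr rfl fun i hi => ?_
  rw [Finset.mem_range, Nat.lt_succ_iff] at hi
  have e1 : N + 1 - 1 - i = N - i := by omega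
  have e2 : N - (N - i) = i := by omega
  rw [e1, e2]

lemma reflect_prod_linear {K : Type*} [Field K] (M : Multiset K) :
    reflect (Multiset.card M) (M.map fun r => X - C r).prod
      = (M.map fun r => 1 - C r * X).prod := by
  induction M using Multiset.induction_on with
  | empty => simpa using reflect_monomial 0 0 (R := K)
  | cons a M ih =>
    rw [Multiset.card_cons, Multiset.map_cons, Multiset.map_cons, Multiset.prod_cons,
      Multiset.prod_cons]
    have hdeg : ((M.map fun r => X - C r).prod).natDegree ≤ Multiset.card M :=
      le_of_eq (natDegree_multiset_prod_X_sub_C_eq_card M)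
    have h1 : Multiset.card M + 1 = 1 + Multiset.card M := by omega
    rw [h1, reflect_mul (X - C a) _ (natDegree_X_sub_C a).le hdeg, ih]
    congr 1
    rw [reflect_sub]
    have hX : reflect 1 (X : K[X]) = 1 := by
      have := reflect_monomial 1 1 (R := K)
      simpa [revAt_le] using this
    have hC : reflect 1 (C a : K[X]) = C a * X := by
      have h0 : (C a : K[X]) = C a * X ^ 0 := by simp
      rw [h0, reflect_C_mul, reflect_monomial]
      simp [revAt_le]
    rw [hX, hC]

lemma roots_inv (p : ℂ[X]) (hp : p ≠ 0) (h0 : p.coeff 0 ≠ 0)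
    (hrefl : reflect p.natDegree p = p) : p.roots.map (·⁻¹) = p.roots := by
  set n := p.natDegree with hn
  have hsplit : p.Splits := IsAlgClosed.splits p
  have hcard : p.roots.card = n := (splits_iff_card_roots).mp hsplit
  have hfact : p = C p.leadingCoeff * (p.roots.map fun a => X - C a).prod :=
    hsplit.eq_prod_roots
  have hroots0 : ∀ r ∈ p.roots, r ≠ 0 := by
    intro r hr hr0
    apply h0
    subst hr0
    rw [Polynomial.coeff_zero_eq_eval_zero]
    exact Polynomial.isRoot_of_mem_roots hr
  have hrefl2 : reflect n p
      = C p.leadingCoeff * (p.roots.map fun r => 1 - C r * X).prod := by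
    conv_lhs => rw [hfact]
    rw [reflect_C_mul, ← hcard, reflect_prod_linear]
  have hcongr : (p.roots.map fun r => 1 - C r * X)
      = (p.roots.map fun r => C (-r) * (X - C r⁻¹)) := by
    apply Multiset.map_congr rfl
    intro r hr
    have hrne := hroots0 r hr
    have h : C (-r) * (X - C r⁻¹) = C (-r) * X - C (-r * r⁻¹) := by
      rw [mul_sub, ← Polynomial.C_mul]
    rw [h, neg_mul, mul_inv_cancel₀ hrne, map_neg, map_neg, map_one]
    ring
  have hπ : (p.roots.map fun r => C (-r) * (X - C r⁻¹)).prod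
      = C ((p.roots.map fun r => -r).prod) * ((p.roots.map (·⁻¹)).map fun r => X - C r).prod := by
    rw [Multiset.prod_map_mul]
    congr 1
    · rw [show (Multiset.map (fun r => (C (-r) : ℂ[X])) p.roots)
          = Multiset.map ((fun x => (C x : ℂ[X])) ∘ fun r => -r) p.roots from rfl,
        ← Multiset.map_map (fun x => (C x : ℂ[X])) (fun r => -r)]
      exact (map_multiset_prod (Polynomial.C : ℂ →+* ℂ[X]) _).symm
    · rw [Multiset.map_map]
      rfl
  have hπprod : ((p.roots.map fun r => -r).prod) ≠ 0 := by
    rw [Ne, Multiset.prod_eq_zero_iff]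
    intro hmem
    obtain ⟨r, hr, hr0⟩ := Multiset.mem_map.mp hmem
    exact hroots0 r hr (by simpa [neg_eq_zero] using hr0)
  have hlc : p.leadingCoeff ≠ 0 := leadingCoeff_ne_zero.mpr hp
  have hfinal : p = C (p.leadingCoeff * (p.roots.map fun r => -r).prod) *
      ((p.roots.map (·⁻¹)).map fun r => X - C r).prod := by
    conv_lhs => rw [← hrefl]
    rw [hrefl2, hcongr, hπ, Polynomial.C_mul]
    ring
  have hr := congrArg Polynomial.roots hfinal
  rw [roots_C_mul _ (mul_ne_zero hlc hπprod), roots_multiset_prod_X_sub_C] at hr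
  exact hr.symm

lemma eq_of_roots_eq (p q : ℂ[X]) (h : p.roots = q.roots) :
    C q.leadingCoeff * p = C p.leadingCoeff * q := by
  have hfp : p = C p.leadingCoeff * (p.roots.map fun a => X - C a).prod :=
    (IsAlgClosed.splits p).eq_prod_roots
  have hfq : q = C q.leadingCoeff * (q.roots.map fun a => X - C a).prod :=
    (IsAlgClosed.splits q).eq_prod_roots
  conv_lhs => rw [hfp]
  conv_rhs => rw [hfq]
  rw [h]
  ring

lemma poly_ext_nonzero (p q : ℂ[X]) (h : ∀ z : ℂ, z ≠ 0 → p.eval z = q.eval z) : p = q := by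
  have hinf : Set.Infinite {z : ℂ | (p - q).IsRoot z} := by
    apply Set.Infinite.mono (s := {(0 : ℂ)}ᶜ)
    · intro z hz
      simp only [Set.mem_setOf_eq, Polynomial.IsRoot, Polynomial.eval_sub]
      rw [h z hz]
      ring
    · exact Set.Finite.infinite_compl (Set.finite_singleton 0)
  have := Polynomial.eq_zero_of_infinite_isRoot _ hinf
  have h2 : p - q = 0 := this
  linear_combination (norm := ring_nf) h2

/-! ### key complexification lemma -/

lemma key2 (a b : ℂ[X]) (hb : b ≠ 0)
    (h : ∀ w : ℂ, ‖w‖ < 1 → b.eval w ≠ 0 →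
      a.eval w * b.eval ((starRingEnd ℂ) w) = a.eval ((starRingEnd ℂ) w) * b.eval w) :
    ∀ u v : ℂ, a.eval u * b.eval v = a.eval v * b.eval u := by
  classical
  set Φ : MvPolynomial (Fin 2) ℂ :=
    Polynomial.aeval (MvPolynomial.X 0) a * Polynomial.aeval (MvPolynomial.X 1) b
      - Polynomial.aeval (MvPolynomial.X 1) a * Polynomial.aeval (MvPolynomial.X 0) b
    with hΦ
  have hΦeval : ∀ x : Fin 2 → ℂ, MvPolynomial.eval x Φ
      = a.eval (x 0) * b.eval (x 1) - a.eval (x 1) * b.eval (x 0) := by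
    intro x
    simp only [hΦ, map_sub, map_mul, eval_aevalX]
  set σ : Fin 2 → MvPolynomial (Fin 2) ℂ :=
    ![MvPolynomial.X 0 + MvPolynomial.C I * MvPolynomial.X 1,
      MvPolynomial.X 0 - MvPolynomial.C I * MvPolynomial.X 1] with hσ
  set Ψ : MvPolynomial (Fin 2) ℂ := MvPolynomial.aeval σ Φ with hΨ
  have hσ0 : ∀ x : Fin 2 → ℂ, MvPolynomial.eval x (σ 0) = x 0 + I * x 1 := by
    intro x; simp [hσ]
  have hσ1 : ∀ x : Fin 2 → ℂ, MvPolynomial.eval x (σ 1) = x 0 - I * x 1 := by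
    intro x; simp [hσ]
  have hΨeval : ∀ x : Fin 2 → ℂ, MvPolynomial.eval x Ψ
      = a.eval (x 0 + I * x 1) * b.eval (x 0 - I * x 1)
        - a.eval (x 0 - I * x 1) * b.eval (x 0 + I * x 1) := by
    intro x
    rw [hΨ, eval_aeval, hΦeval]
    simp only [hσ0, hσ1]
  have hgood : ∀ s t : ℝ, ‖(s : ℂ) + I * t‖ < 1 →
      b.eval ((s : ℂ) + I * t) ≠ 0 → MvPolynomial.eval ![(s : ℂ), (t : ℂ)] Ψ = 0 := by
    intro s t h1 h2
    have hconj : (starRingEnd ℂ) ((s : ℂ) + I * t) = (s : ℂ) - I * t := by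
      simp [Complex.conj_ofReal, Complex.conj_I]
      ring
    have := h ((s : ℂ) + I * t) h1 h2
    rw [hΨeval]
    simp only [Matrix.cons_val_zero, Matrix.cons_val_one, Matrix.head_cons]
    rw [← hconj, this, hconj]
    ring
  have hs : ∀ s : ℝ, |s| < 1/2 → ∀ t : ℂ, MvPolynomial.eval ![(s : ℂ), t] Ψ = 0 := by
    intro s hslt t
    set θ : ℂ[X] := MvPolynomial.aeval ![Polynomial.C (s : ℂ), Polynomial.X] Ψ with hθdef
    have hθeval : ∀ t : ℂ, θ.eval t = MvPolynomial.eval ![(s : ℂ), t] Ψ := by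
      intro t
      rw [hθdef, eval_aeval_poly]
      have hfn : (fun i => (![Polynomial.C (s : ℂ), Polynomial.X] i).eval t) = ![(s : ℂ), t] := by
        funext i; fin_cases i <;> simp
      rw [hfn]
    have hθ0 : θ = 0 := by
      apply Polynomial.eq_zero_of_infinite_isRoot
      have hbadfin : {t : ℝ | b.IsRoot ((s : ℂ) + I * t)}.Finite := by
        have hinj : Function.Injective (fun t : ℝ => (s : ℂ) + I * t) := by
          intro t1 t2 h12
          simp only [add_right_inj] at h12
          have := mul_left_cancel₀ I_ne_zero h12
          exact_mod_cast this
        exact Set.Finite.preimage hinj.injOn (Polynomial.finite_setOf_isRoot hb)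
      have hSinf : {t : ℝ | |t| < 1/2 ∧ ¬ b.IsRoot ((s : ℂ) + I * t)}.Infinite := by
        have h1 : {t : ℝ | |t| < 1/2} = Set.Ioo (-(1/2)) (1/2) := by
          ext t; simp [abs_lt]
        have h2 : Set.Infinite {t : ℝ | |t| < 1/2} := by
          rw [h1]; exact Set.Ioo_infinite (by norm_num : (-(1/2) : ℝ) < 1/2)
        have h3 : {t : ℝ | |t| < 1/2 ∧ ¬ b.IsRoot ((s : ℂ) + I * t)}
            = {t : ℝ | |t| < 1/2} \ {t : ℝ | b.IsRoot ((s : ℂ) + I * t)} := by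
          ext t; simp [Set.mem_diff]
        rw [h3]
        exact Set.Infinite.diff h2 hbadfin
      apply Set.Infinite.mono _ (Set.Infinite.image (fun x hx y hy => by
        exact fun hxy => Complex.ofReal_injective hxy) hSinf)
      rintro z ⟨t, ⟨ht1, ht2⟩, rfl⟩
      have habs : ‖(s : ℂ) + I * t‖ < 1 := by
        calc ‖(s : ℂ) + I * t‖ ≤ ‖(s : ℂ)‖ + ‖I * t‖ :=
              norm_add_le _ _
        _ = |s| + |t| := by simp
        _ < 1 := by linarith
      show θ.IsRoot (t : ℂ)
      rw [Polynomial.IsRoot, hθeval]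
      exact hgood s t habs ht2
    rw [← hθeval, hθ0]
    simp
  have hst : ∀ s t : ℂ, MvPolynomial.eval ![s, t] Ψ = 0 := by
    intro s t
    set η : ℂ[X] := MvPolynomial.aeval ![Polynomial.X, Polynomial.C t] Ψ with hηdef
    have hηeval : ∀ s : ℂ, η.eval s = MvPolynomial.eval ![s, t] Ψ := by
      intro s
      rw [hηdef, eval_aeval_poly]
      have hfn : (fun i => (![Polynomial.X, Polynomial.C t] i).eval s) = ![s, t] := by
        funext i; fin_cases i <;> simp
      rw [hfn]
    have hη0 : η = 0 := by
      apply Polynomial.eq_zero_of_infinite_isRoot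
      have : Set.Infinite {s : ℝ | |s| < 1/2} := by
        have h1 : {s : ℝ | |s| < 1/2} = Set.Ioo (-(1/2)) (1/2) := by
          ext u; simp [abs_lt]
        rw [h1]; exact Set.Ioo_infinite (by norm_num : (-(1/2) : ℝ) < 1/2)
      apply Set.Infinite.mono _ (Set.Infinite.image (fun x hx y hy => by
        exact fun hxy => Complex.ofReal_injective hxy) this)
      rintro z ⟨u, hu, rfl⟩
      show η.IsRoot (u : ℂ)
      rw [Polynomial.IsRoot, hηeval]
      exact hs u hu t
    rw [← hηeval, hη0]
    simp
  intro u v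
  have hkey := hst ((u + v) / 2) ((u - v) / (2 * I))
  rw [hΨeval] at hkey
  simp only [Matrix.cons_val_zero, Matrix.cons_val_one, Matrix.head_cons] at hkey
  have e1 : (u + v) / 2 + I * ((u - v) / (2 * I)) = u := by
    field_simp
    ring
  have e2 : (u + v) / 2 - I * ((u - v) / (2 * I)) = v := by
    field_simp
    ring
  rw [e1, e2] at hkey
  exact sub_eq_zero.mp hkey

/-! ### bivariate representations -/

/-- the bivariate representation over `ℝ`, outer variable `z` (index 0). -/
def QR (ξ : MvPolynomial (Fin 2) ℝ) : Polynomial (Polynomial ℝ) :=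
  MvPolynomial.aeval ![Polynomial.X, Polynomial.C Polynomial.X] ξ

/-- the bivariate representation over `ℂ`, outer variable `z` (index 0). -/
def QC (ξ : MvPolynomial (Fin 2) ℝ) : Polynomial (Polynomial ℂ) :=
  MvPolynomial.aeval ![Polynomial.X, Polynomial.C Polynomial.X] ξ

def ι1 : MvPolynomial (Fin 1) ℝ →ₐ[ℝ] Polynomial ℝ := MvPolynomial.aeval ![Polynomial.X]

def κ1 : Polynomial ℝ →ₐ[ℝ] MvPolynomial (Fin 1) ℝ := Polynomial.aeval (MvPolynomial.X 0)

def ιE : MvPolynomial (Fin 1) ℝ ≃ₐ[ℝ] Polynomial ℝ :=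
  AlgEquiv.ofAlgHom ι1 κ1
    (Polynomial.algHom_ext (by simp [ι1, κ1]))
    (MvPolynomial.algHom_ext (fun i => by fin_cases i; simp [ι1, κ1]))

def EQ : MvPolynomial (Fin 2) ℝ ≃ₐ[ℝ] Polynomial (Polynomial ℝ) :=
  (MvPolynomial.finSuccEquiv ℝ 1).trans (Polynomial.mapAlgEquiv ιE)

lemma EQ_eq (ξ : MvPolynomial (Fin 2) ℝ) : EQ ξ = QR ξ := by
  have h : (EQ : MvPolynomial (Fin 2) ℝ ≃ₐ[ℝ] Polynomial (Polynomial ℝ)).toAlgHom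
      = (MvPolynomial.aeval ![Polynomial.X, Polynomial.C Polynomial.X] :
        MvPolynomial (Fin 2) ℝ →ₐ[ℝ] Polynomial (Polynomial ℝ)) := by
    apply MvPolynomial.algHom_ext
    intro i
    fin_cases i
    · show EQ (MvPolynomial.X 0) = _
      simp [EQ, Polynomial.mapAlgEquiv, MvPolynomial.finSuccEquiv_X_zero]
    · show EQ (MvPolynomial.X 1) = _
      have h1 : (MvPolynomial.X 1 : MvPolynomial (Fin 2) ℝ) = MvPolynomial.X (Fin.succ 0) := rfl
      simp [EQ, h1, Polynomial.mapAlgEquiv, MvPolynomial.finSuccEquiv_X_succ, ιE, ι1]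
  exact congrArg (fun f => (f : MvPolynomial (Fin 2) ℝ →ₐ[ℝ] Polynomial (Polynomial ℝ)) ξ) h

lemma QR_injective : Function.Injective (QR) := by
  intro p q h
  rw [← EQ_eq, ← EQ_eq] at h
  exact EQ.injective h

lemma deg0 (p : MvPolynomial (Fin 2) ℝ) : p.degreeOf 0 = (QR p).natDegree := by
  rw [← MvPolynomial.natDegree_finSuccEquiv, ← EQ_eq]
  have h : EQ p = (MvPolynomial.finSuccEquiv ℝ 1 p).map
      (ιE : MvPolynomial (Fin 1) ℝ →+* Polynomial ℝ) := rfl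
  rw [h, Polynomial.natDegree_map_eq_of_injective]
  exact ιE.injective

lemma deg1 (p : MvPolynomial (Fin 2) ℝ) :
    p.degreeOf 1 = (QR (MvPolynomial.rename (Equiv.swap 0 1) p)).natDegree := by
  rw [← deg0]
  have := MvPolynomial.degreeOf_rename_of_injective
    (p := p) (f := ⇑(Equiv.swap (0 : Fin 2) 1)) (Equiv.swap 0 1).injective 1
  rw [Equiv.swap_apply_right] at this
  rw [this]

lemma deg0_mul {p q : MvPolynomial (Fin 2) ℝ} (hp : p ≠ 0) (hq : q ≠ 0) :
    (p * q).degreeOf 0 = p.degreeOf 0 + q.degreeOf 0 := by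
  rw [deg0, deg0, deg0]
  have hmul : QR (p * q) = QR p * QR q := map_mul _ _ _
  rw [hmul, Polynomial.natDegree_mul]
  · intro h; exact hp (QR_injective (by rw [h, QR, map_zero]))
  · intro h; exact hq (QR_injective (by rw [h, QR, map_zero]))

lemma deg1_mul {p q : MvPolynomial (Fin 2) ℝ} (hp : p ≠ 0) (hq : q ≠ 0) :
    (p * q).degreeOf 1 = p.degreeOf 1 + q.degreeOf 1 := by
  rw [deg1, deg1, deg1]
  have hmul : MvPolynomial.rename (Equiv.swap (0:Fin 2) 1) (p * q)
      = MvPolynomial.rename (Equiv.swap (0:Fin 2) 1) p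
        * MvPolynomial.rename (Equiv.swap (0:Fin 2) 1) q := map_mul _ _ _
  have hinj := MvPolynomial.rename_injective (R := ℝ) (⇑(Equiv.swap (0:Fin 2) 1))
    (Equiv.swap 0 1).injective
  rw [hmul]
  have h1 : QR (MvPolynomial.rename (Equiv.swap (0:Fin 2) 1) p
        * MvPolynomial.rename (Equiv.swap (0:Fin 2) 1) q)
      = QR (MvPolynomial.rename (Equiv.swap (0:Fin 2) 1) p)
        * QR (MvPolynomial.rename (Equiv.swap (0:Fin 2) 1) q) := map_mul _ _ _
  rw [h1, Polynomial.natDegree_mul]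
  · intro h
    exact hp (hinj (by simpa using QR_injective (by rw [h, QR, map_zero])))
  · intro h
    exact hq (hinj (by simpa using QR_injective (by rw [h, QR, map_zero])))

lemma degreeOf_unit {u : MvPolynomial (Fin 2) ℝ} (hu : IsUnit u) (i : Fin 2) :
    u.degreeOf i = 0 := by
  obtain ⟨v, hv⟩ := hu.exists_right_inv
  have hu0 : u ≠ 0 := by
    intro h; rw [h, zero_mul] at hv; exact zero_ne_one hv
  have hv0 : v ≠ 0 := by
    intro h; rw [h, mul_zero] at hv; exact zero_ne_one hv
  have h1 : (u * v).degreeOf i = u.degreeOf i + v.degreeOf i := by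
    fin_cases i
    · exact deg0_mul hu0 hv0
    · exact deg1_mul hu0 hv0
  rw [hv] at h1
  have h2 : (1 : MvPolynomial (Fin 2) ℝ).degreeOf i = 0 := by
    have : (1 : MvPolynomial (Fin 2) ℝ) = MvPolynomial.C 1 := by simp
    rw [this, MvPolynomial.degreeOf_C]
  omega

lemma aeval_CC {R A : Type*} [CommSemiring R] [CommSemiring A] [Algebra R A] (x : A) (f : R[X]) :
    Polynomial.aeval (Polynomial.C x) f = Polynomial.C (Polynomial.aeval x f) := by
  have h : (Polynomial.aeval (Polynomial.C x) : R[X] →ₐ[R] Polynomial A)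
      = (Polynomial.CAlgHom.comp (Polynomial.aeval x) : R[X] →ₐ[R] Polynomial A) := by
    apply Polynomial.algHom_ext
    simp [Polynomial.CAlgHom]
  rw [congrArg (fun F => (F : R[X] →ₐ[R] Polynomial A) f) h]
  rfl

lemma QR_aevalX1 (f : Polynomial ℝ) :
    QR (Polynomial.aeval (MvPolynomial.X 1) f) = Polynomial.C f := by
  have h := Polynomial.aeval_algHom_apply
    (MvPolynomial.aeval ![Polynomial.X, Polynomial.C Polynomial.X] :
      MvPolynomial (Fin 2) ℝ →ₐ[ℝ] Polynomial (Polynomial ℝ)) (MvPolynomial.X 1) f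
  simp only [MvPolynomial.aeval_X, Matrix.cons_val_one, Matrix.head_cons] at h
  have h2 : Polynomial.aeval (Polynomial.C (Polynomial.X : Polynomial ℝ)) f
      = Polynomial.C f := by
    rw [aeval_CC, Polynomial.aeval_X_left_apply]
  show (MvPolynomial.aeval ![Polynomial.X, Polynomial.C Polynomial.X] :
      MvPolynomial (Fin 2) ℝ →ₐ[ℝ] Polynomial (Polynomial ℝ))
      (Polynomial.aeval (MvPolynomial.X 1) f) = Polynomial.C f
  exact h.symm.trans h2

lemma deg1_aevalX0 (f : Polynomial ℝ) :
    (Polynomial.aeval (MvPolynomial.X 0 : MvPolynomial (Fin 2) ℝ) f).degreeOf 1 = 0 := by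
  rw [deg1]
  have h : MvPolynomial.rename (Equiv.swap (0:Fin 2) 1)
        (Polynomial.aeval (MvPolynomial.X 0 : MvPolynomial (Fin 2) ℝ) f)
      = Polynomial.aeval (MvPolynomial.X 1 : MvPolynomial (Fin 2) ℝ) f := by
    rw [← Polynomial.aeval_algHom_apply (MvPolynomial.rename (Equiv.swap (0:Fin 2) 1))
      (MvPolynomial.X 0) f, MvPolynomial.rename_X, Equiv.swap_apply_left]
  rw [h, QR_aevalX1, Polynomial.natDegree_C]

lemma deg0_aevalX1 (f : Polynomial ℝ) :
    (Polynomial.aeval (MvPolynomial.X 1 : MvPolynomial (Fin 2) ℝ) f).degreeOf 0 = 0 := by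
  rw [deg0, QR_aevalX1, Polynomial.natDegree_C]

/-- if `ξ(r, w) = 0` for a real `r` and all complex `w`, contradiction. -/
lemma no_line (ξ : MvPolynomial (Fin 2) ℝ) (hirr : Irreducible ξ) (hdw : 0 < ξ.degreeOf 1)
    (r : ℝ) (h0 : ∀ w : ℂ, ev2 ξ (r : ℂ) w = 0) : False := by
  classical
  have hev : ∀ w0 : ℝ, ((QR ξ).eval (Polynomial.C r)).eval w0 = MvPolynomial.eval ![r, w0] ξ := by
    intro w0
    have hh : ((Polynomial.evalRingHom w0).comp ((Polynomial.evalRingHom (Polynomial.C r)).comp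
        ((MvPolynomial.aeval ![Polynomial.X, Polynomial.C Polynomial.X] :
          MvPolynomial (Fin 2) ℝ →ₐ[ℝ] Polynomial (Polynomial ℝ)) :
            MvPolynomial (Fin 2) ℝ →+* Polynomial (Polynomial ℝ))))
        = (MvPolynomial.eval ![r, w0] : MvPolynomial (Fin 2) ℝ →+* ℝ) := by
      apply MvPolynomial.ringHom_ext
      · intro a; simp
      · intro i; fin_cases i <;> simp
    exact congrArg (fun f => (f : MvPolynomial (Fin 2) ℝ →+* ℝ) ξ) hh
  have hzero : (QR ξ).eval (Polynomial.C r) = 0 := by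
    apply Polynomial.funext
    intro w0
    rw [hev w0, Polynomial.eval_zero]
    have := h0 (w0 : ℂ)
    rw [ev2_ofReal] at this
    exact_mod_cast this
  have hdvd' : (Polynomial.X - Polynomial.C (Polynomial.C r)) ∣ QR ξ :=
    Polynomial.dvd_iff_isRoot.mpr hzero
  set d : MvPolynomial (Fin 2) ℝ := MvPolynomial.X 0 - MvPolynomial.C r with hd
  have hQRd : QR d = Polynomial.X - Polynomial.C (Polynomial.C r) := by
    simp [QR, hd, MvPolynomial.aeval_X]
  have hdvd : d ∣ ξ := by
    rw [← hQRd] at hdvd'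
    obtain ⟨e, he⟩ := hdvd'
    obtain ⟨e', rfl⟩ := (EQ.surjective e)
    rw [EQ_eq e'] at he
    refine ⟨e', QR_injective ?_⟩
    rw [show QR (d * e') = QR d * QR e' from map_mul _ _ _]
    exact he
  obtain ⟨e, he⟩ := hdvd
  have hd0 : d.degreeOf 0 = 1 := by
    rw [deg0, hQRd]
    exact Polynomial.natDegree_X_sub_C _
  have hd1 : d.degreeOf 1 = 0 := by
    rw [deg1]
    have hr : MvPolynomial.rename (Equiv.swap (0:Fin 2) 1) d
        = MvPolynomial.X 1 - MvPolynomial.C r := by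
      simp [hd, MvPolynomial.rename_X]
    rw [hr]
    have : QR (MvPolynomial.X 1 - MvPolynomial.C r)
        = Polynomial.C (Polynomial.X - Polynomial.C r) := by
      simp [QR]
    rw [this, Polynomial.natDegree_C]
  rcases hirr.isUnit_or_isUnit he with hu | hu
  · have := degreeOf_unit hu 0
    omega
  · have hdne : d ≠ 0 := by
      intro h
      have := congrArg (MvPolynomial.degreeOf 0) h
      rw [hd0] at this
      simp [MvPolynomial.degreeOf_zero] at this
    have hene : e ≠ 0 := by
      intro h
      rw [h, mul_zero] at he
      exact hirr.ne_zero he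
    have h1 : ξ.degreeOf 1 = d.degreeOf 1 + e.degreeOf 1 := by
      rw [he]; exact deg1_mul hdne hene
    rw [hd1, degreeOf_unit hu 1] at h1
    omega

/-! ### links between `QC` and `QR`, and `ev2` -/

lemma QC_coeff (ξ : MvPolynomial (Fin 2) ℝ) (j : ℕ) :
    (QC ξ).coeff j = ((QR ξ).coeff j).map (algebraMap ℝ ℂ) := by
  have hh : ((Polynomial.mapRingHom (Polynomial.mapRingHom (algebraMap ℝ ℂ))).comp
      ((MvPolynomial.aeval ![Polynomial.X, Polynomial.C Polynomial.X] :
        MvPolynomial (Fin 2) ℝ →ₐ[ℝ] Polynomial (Polynomial ℝ)) :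
          MvPolynomial (Fin 2) ℝ →+* Polynomial (Polynomial ℝ)))
      = ((MvPolynomial.aeval ![Polynomial.X, Polynomial.C Polynomial.X] :
        MvPolynomial (Fin 2) ℝ →ₐ[ℝ] Polynomial (Polynomial ℂ)) :
          MvPolynomial (Fin 2) ℝ →+* Polynomial (Polynomial ℂ)) := by
    apply MvPolynomial.ringHom_ext
    · intro a
      simp [MvPolynomial.algebraMap_eq, Polynomial.algebraMap_apply]
    · intro i; fin_cases i <;> simp
  have h2 := congrArg (fun f => (f : MvPolynomial (Fin 2) ℝ →+* Polynomial (Polynomial ℂ)) ξ) hh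
  have h3 : QC ξ = (QR ξ).map (Polynomial.mapRingHom (algebraMap ℝ ℂ)) := by
    rw [QC, QR]
    exact h2.symm
  rw [h3, Polynomial.coeff_map, Polynomial.coe_mapRingHom]

lemma ev2_QC (ξ : MvPolynomial (Fin 2) ℝ) (z w : ℂ) :
    ev2 ξ z w = ((QC ξ).map (Polynomial.evalRingHom w)).eval z := by
  have hh : ((Polynomial.evalRingHom z).comp ((Polynomial.mapRingHom (Polynomial.evalRingHom w)).comp
      ((MvPolynomial.aeval ![Polynomial.X, Polynomial.C Polynomial.X] :
        MvPolynomial (Fin 2) ℝ →ₐ[ℝ] Polynomial (Polynomial ℂ)) :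
          MvPolynomial (Fin 2) ℝ →+* Polynomial (Polynomial ℂ))))
      = ((MvPolynomial.aeval ![z, w] : MvPolynomial (Fin 2) ℝ →ₐ[ℝ] ℂ) :
          MvPolynomial (Fin 2) ℝ →+* ℂ) := by
    apply MvPolynomial.ringHom_ext
    · intro a; simp [MvPolynomial.algebraMap_eq]
    · intro i; fin_cases i <;> simp
  have := congrArg (fun f => (f : MvPolynomial (Fin 2) ℝ →+* ℂ) ξ) hh
  rw [ev2]
  exact this.symm

lemma PP_ext (A B : Polynomial (Polynomial ℂ))
    (h : ∀ w : ℂ, A.map (Polynomial.evalRingHom w) = B.map (Polynomial.evalRingHom w)) :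
    A = B := by
  refine Polynomial.ext fun j => Polynomial.funext fun w => ?_
  have := congrArg (fun P => Polynomial.coeff P j) (h w)
  simpa [Polynomial.coeff_map] using this

lemma eval_map_real (p : Polynomial ℝ) (x : ℝ) :
    (p.map (algebraMap ℝ ℂ)).eval ((x : ℝ) : ℂ) = ((p.eval x : ℝ) : ℂ) := by
  rw [Polynomial.eval_map]
  exact Polynomial.eval₂_at_apply (algebraMap ℝ ℂ) x

lemma eval_map_conj (p : Polynomial ℝ) (w : ℂ) :
    (p.map (algebraMap ℝ ℂ)).eval ((starRingEnd ℂ) w)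
      = (starRingEnd ℂ) ((p.map (algebraMap ℝ ℂ)).eval w) := by
  rw [Polynomial.eval_map, Polynomial.eval_map]
  rw [Polynomial.hom_eval₂ p (algebraMap ℝ ℂ) (starRingEnd ℂ) w]
  congr 1
  ext r
  simp [Complex.conj_ofReal]

end SRaux

open SRaux

/-- Lemma 4.14: an irreducible real bivariate polynomial depending on both variables and
satisfying `ξ(z,w) = c·z^k·ξ(1/z,w)` has `c = 1`, `k` even, and a zero in the open bidisk. -/
theorem selfreciprocal_irreducible_has_bidisk_zero
    (ξ : MvPolynomial (Fin 2) ℝ) (hirr : Irreducible ξ)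
    (hdz : 0 < ξ.degreeOf 0) (hdw : 0 < ξ.degreeOf 1)
    (k : ℕ) (hk : 1 ≤ k) (c : ℝ)
    (heq : ∀ z w : ℂ, z ≠ 0 → ev2 ξ z w = (c : ℂ) * z ^ k * ev2 ξ z⁻¹ w) :
    c = 1 ∧ Even k ∧
      ∃ z₀ w₀ : ℂ, ‖z₀‖ < 1 ∧ ‖w₀‖ < 1 ∧ ev2 ξ z₀ w₀ = 0 := by
  classical
  -- c = 1
  have hc : c = 1 := by
    by_contra hc
    have h0 : ∀ w : ℂ, ev2 ξ ((1:ℝ) : ℂ) w = 0 := by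
      intro w
      have h := heq 1 w one_ne_zero
      rw [inv_one, one_pow, mul_one] at h
      have hne : (c : ℂ) - 1 ≠ 0 := by
        intro h'
        apply hc
        have : (c : ℂ) = 1 := by linear_combination h'
        exact_mod_cast this
      have : ((c : ℂ) - 1) * ev2 ξ 1 w = 0 := by linear_combination -h
      rcases mul_eq_zero.mp this with h' | h'
      · exact absurd h' hne
      · simpa using h'
    exact absurd (no_line ξ hirr hdw 1 h0) (by simp)
  subst hc
  refine ⟨rfl, ?_, ?_⟩
  -- Even k
  · by_contra hodd
    have hoddk : Odd k := Nat.odd_iff.mpr (Nat.not_even_iff.mp hodd)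
    have h0 : ∀ w : ℂ, ev2 ξ ((-1:ℝ) : ℂ) w = 0 := by
      intro w
      have h := heq (-1) w (by norm_num)
      rw [show ((-1 : ℂ))⁻¹ = -1 by norm_num, hoddk.neg_one_pow] at h
      push_cast at h ⊢
      linear_combination h / 2
    exact absurd (no_line ξ hirr hdw (-1) h0) (by simp)
  -- zero in the bidisk
  · by_contra hno
    push_neg at hno
    -- hno : ∀ z₀ w₀, abs z₀ < 1 → abs w₀ < 1 → ev2 ξ z₀ w₀ ≠ 0
    have heq1 : ∀ z w : ℂ, z ≠ 0 → ev2 ξ z w = z ^ k * ev2 ξ z⁻¹ w := by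
      intro z w hz
      have := heq z w hz
      simpa using this
    set Q := QC ξ with hQdef
    have hξ0 : ξ ≠ 0 := hirr.ne_zero
    have hQR0 : QR ξ ≠ 0 := by
      intro h
      apply hξ0
      apply QR_injective
      rw [h]
      simp [QR]
    have hQ0 : Q ≠ 0 := by
      intro h
      apply hQR0
      have h' : QC ξ = 0 := by rw [← hQdef]; exact h
      refine Polynomial.ext fun j => ?_
      have hcj := congrArg (fun P => Polynomial.coeff P j) h'
      simp only [Polynomial.coeff_zero] at hcj
      rw [QC_coeff] at hcj
      have h3 := Polynomial.map_injective (algebraMap ℝ ℂ)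
        (fun a b hab => by exact_mod_cast hab) (hcj.trans (Polynomial.map_zero _).symm)
      simpa using h3
    set N := Q.natDegree with hN
    have hpw : ∀ w z : ℂ, ev2 ξ z w = ((Q.map (Polynomial.evalRingHom w)).eval z) :=
      fun w z => ev2_QC ξ z w
    have hpwdeg : ∀ w : ℂ, (Q.map (Polynomial.evalRingHom w)).natDegree ≤ N :=
      fun w => Polynomial.natDegree_map_le
    have hpweq : ∀ w : ℂ, ∀ z : ℂ, z ≠ 0 →
        ((Q.map (Polynomial.evalRingHom w)).eval z)
          = z ^ k * ((Q.map (Polynomial.evalRingHom w)).eval z⁻¹) := by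
      intro w z hz
      rw [← hpw, ← hpw]
      exact heq1 z w hz
    -- global reflect identity
    have hrefleq : Polynomial.X ^ N * Q = Polynomial.X ^ k * Polynomial.reflect N Q := by
      apply PP_ext
      intro w
      set p := Q.map (Polynomial.evalRingHom w) with hp
      have h1 : (Polynomial.X ^ N * Q).map (Polynomial.evalRingHom w)
          = Polynomial.X ^ N * p := by
        simp [hp]
      have h2 : (Polynomial.X ^ k * Polynomial.reflect N Q).map (Polynomial.evalRingHom w)
          = Polynomial.X ^ k * Polynomial.reflect N p := by
        rw [Polynomial.map_mul, Polynomial.map_pow, Polynomial.map_X,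
          ← Polynomial.reflect_map, ← hp]
      rw [h1, h2]
      apply poly_ext_nonzero
      intro z hz
      rw [Polynomial.eval_mul, Polynomial.eval_mul, Polynomial.eval_pow, Polynomial.eval_pow,
        Polynomial.eval_X, eval_reflect N p (hpwdeg w) hz, hpweq w z hz]
      ring
    -- k = N
    have hkN : k = N := by
      rcases lt_trichotomy k N with h | h | h
      · exfalso
        have hL : (Polynomial.X ^ N * Q).natDegree = N + N := by
          rw [Polynomial.natDegree_mul (pow_ne_zero _ Polynomial.X_ne_zero) hQ0,
            Polynomial.natDegree_X_pow]
        have hR : (Polynomial.X ^ k * Polynomial.reflect N Q).natDegree ≤ k + N := by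
          refine le_trans (Polynomial.natDegree_mul_le) ?_
          rw [Polynomial.natDegree_X_pow]
          exact Nat.add_le_add_left (natDegree_reflect_le le_rfl) k
        rw [hrefleq] at hL
        omega
      · exact h
      · exfalso
        have ha0 : Q.coeff 0 = 0 := by
          have hc := congrArg (fun P => Polynomial.coeff P N) hrefleq
          rw [show (Polynomial.X ^ N * Q) = Q * Polynomial.X ^ N by ring,
            show (Polynomial.X ^ k * Polynomial.reflect N Q)
              = Polynomial.reflect N Q * Polynomial.X ^ k by ring] at hc
          rw [Polynomial.coeff_mul_X_pow', Polynomial.coeff_mul_X_pow'] at hc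
          simp only [le_refl, if_true, Nat.sub_self] at hc
          rw [if_neg (by omega)] at hc
          exact hc
        have h0 : ∀ w : ℂ, ev2 ξ ((0:ℝ) : ℂ) w = 0 := by
          intro w
          rw [show (((0:ℝ)) : ℂ) = 0 by norm_num, hpw w 0,
            ← Polynomial.coeff_zero_eq_eval_zero, Polynomial.coeff_map, ha0]
          simp
        exact absurd (no_line ξ hirr hdw 0 h0) (by simp)
    have hQrefl : Polynomial.reflect k Q = Q := by
      have h1 : Polynomial.X ^ N * Q = Polynomial.X ^ N * Polynomial.reflect N Q := by
        rw [hrefleq, hkN]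
      have h2 := mul_left_cancel₀ (pow_ne_zero N (Polynomial.X_ne_zero
        (R := Polynomial ℂ))) h1
      rw [hkN, ← h2]
    set ak := Q.coeff k with hak
    have hakne : ak ≠ 0 := by
      rw [hak, hkN]
      exact Polynomial.leadingCoeff_ne_zero.mpr hQ0
    have ha0k : Q.coeff 0 = ak := by
      conv_lhs => rw [← hQrefl]
      rw [Polynomial.coeff_reflect, revAt_le (Nat.zero_le k), Nat.sub_zero, hak]
    -- the conjugate-pair identity at good w
    have hIj : ∀ j : ℕ, ∀ w : ℂ, ‖w‖ < 1 → ak.eval w ≠ 0 →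
        (Q.coeff j).eval w * ak.eval ((starRingEnd ℂ) w)
          = (Q.coeff j).eval ((starRingEnd ℂ) w) * ak.eval w := by
      intro j w hw hakw
      set p := Q.map (Polynomial.evalRingHom w) with hp
      set q := Q.map (Polynomial.evalRingHom ((starRingEnd ℂ) w)) with hq
      have hpcoeff : ∀ i, p.coeff i = (Q.coeff i).eval w := by
        intro i; rw [hp, Polynomial.coeff_map]; rfl
      have hqcoeff : ∀ i, q.coeff i = (Q.coeff i).eval ((starRingEnd ℂ) w) := by
        intro i; rw [hq, Polynomial.coeff_map]; rfl
      have hpdeg : p.natDegree = k := by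
        apply le_antisymm
        · rw [hkN]; exact hpwdeg w
        · apply Polynomial.le_natDegree_of_ne_zero
          rw [hpcoeff]; exact hakw
      have hp0 : p ≠ 0 := by
        intro h
        apply hakw
        rw [← hpcoeff k, h, Polynomial.coeff_zero]
      have hcoeff0 : p.coeff 0 ≠ 0 := by
        rw [hpcoeff, ha0k]; exact hakw
      have hpref : Polynomial.reflect p.natDegree p = p := by
        rw [hpdeg, hp, Polynomial.reflect_map, hQrefl]
      -- all roots on the unit circle
      have hcirc : ∀ z ∈ p.roots, ‖z‖ = 1 := by
        intro z hz
        have hroot : p.eval z = 0 := Polynomial.isRoot_of_mem_roots hz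
        have hzne : z ≠ 0 := by
          intro h
          apply hcoeff0
          rw [Polynomial.coeff_zero_eq_eval_zero]
          rw [h] at hroot
          exact hroot
        have hev1 : ev2 ξ z w = 0 := by rw [hpw w z]; exact hroot
        have hge : 1 ≤ ‖z‖ := not_lt.mp (fun hlt => hno z w hlt hw hev1)
        have hrootinv : p.eval z⁻¹ = 0 := by
          have h := hpweq w z hzne
          rw [hroot] at h
          rcases mul_eq_zero.mp h.symm with h' | h'
          · exact absurd h' (pow_ne_zero _ hzne)
          · exact h'
        have hev2 : ev2 ξ z⁻¹ w = 0 := by rw [hpw w z⁻¹]; exact hrootinv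
        have hge2 : 1 ≤ ‖z⁻¹‖ := not_lt.mp (fun hlt => hno z⁻¹ w hlt hw hev2)
        rw [norm_inv] at hge2
        have hpos : 0 < ‖z‖ := by
          rcases (norm_nonneg z).lt_or_eq with h' | h'
          · exact h'
          · exact absurd (norm_eq_zero.mp h'.symm) hzne
        have hle : ‖z‖ ≤ 1 := by
          have h3 := mul_le_mul_of_nonneg_left hge2 hpos.le
          rw [mul_inv_cancel₀ hpos.ne', mul_one] at h3
          exact h3
        linarith
      have hq_eq : q = p.map (starRingEnd ℂ) := by
        refine Polynomial.ext fun i => ?_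
        have h1 : q.coeff i = (Q.coeff i).eval ((starRingEnd ℂ) w) := hqcoeff i
        have h2 : (p.map (starRingEnd ℂ)).coeff i = (starRingEnd ℂ) (p.coeff i) :=
          Polynomial.coeff_map _ _
        rw [h1, h2, hpcoeff, QC_coeff]
        exact eval_map_conj _ w
      have hq0 : q ≠ 0 := by
        rw [hq_eq]
        intro h
        exact hp0 ((Polynomial.map_eq_zero_iff (starRingEnd ℂ).injective).mp h)
      have hqroots : q.roots = p.roots.map (starRingEnd ℂ) := by
        rw [hq_eq]
        exact (IsAlgClosed.splits p).roots_map _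
      have hrootsinv := roots_inv p hp0 hcoeff0 hpref
      have hconjroots : p.roots.map (starRingEnd ℂ) = p.roots.map (·⁻¹) := by
        apply Multiset.map_congr rfl
        intro z hz
        have h1 := hcirc z hz
        have h2 : (starRingEnd ℂ) z * z = 1 := by
          rw [mul_comm, Complex.mul_conj]
          rw [← Complex.sq_norm z, h1]
          norm_num
        exact eq_inv_of_mul_eq_one_left h2
      have hqp : q.roots = p.roots := by rw [hqroots, hconjroots, hrootsinv]
      have hEQc := eq_of_roots_eq q p hqp
      have hqdeg : q.natDegree = k := by
        rw [hq_eq, Polynomial.natDegree_map_eq_of_injective (starRingEnd ℂ).injective, hpdeg]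
      have hlead_p : p.leadingCoeff = ak.eval w := by
        rw [Polynomial.leadingCoeff, hpdeg, hpcoeff, hak]
      have hlead_q : q.leadingCoeff = ak.eval ((starRingEnd ℂ) w) := by
        rw [Polynomial.leadingCoeff, hqdeg, hqcoeff, hak]
      have hcoeffj := congrArg (fun f => Polynomial.coeff f j) hEQc
      simp only [Polynomial.coeff_C_mul, hpcoeff, hqcoeff, hlead_p, hlead_q] at hcoeffj
      linear_combination -hcoeffj
    -- propagate to independent variables
    have hprop : ∀ j : ℕ, ∀ u v : ℂ,
        (Q.coeff j).eval u * ak.eval v = (Q.coeff j).eval v * ak.eval u := by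
      intro j
      exact key2 (Q.coeff j) ak hakne (fun w hw hbw => hIj j w hw hbw)
    -- pick a good real point v₀
    set akR := (QR ξ).coeff k with hakR
    have hakRC : ak = akR.map (algebraMap ℝ ℂ) := by
      rw [hak, hQdef, QC_coeff, hakR]
    have hakR0 : akR ≠ 0 := by
      intro h
      apply hakne
      rw [hakRC, h, Polynomial.map_zero]
    obtain ⟨v₀, hv₀⟩ : ∃ v₀ : ℝ, akR.eval v₀ ≠ 0 := by
      obtain ⟨v₀, hv₀⟩ := ((Polynomial.finite_setOf_isRoot hakR0).infinite_compl).nonempty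
      exact ⟨v₀, hv₀⟩
    set c₀ := akR.eval v₀ with hc₀
    set fR := (QR ξ).map (Polynomial.evalRingHom v₀) with hfR
    have hfRcoeff : ∀ i, fR.coeff i = ((QR ξ).coeff i).eval v₀ := by
      intro i; rw [hfR, Polynomial.coeff_map]; rfl
    -- the complex one-variable identity
    have P1 : ∀ w : ℂ, (Q.map (Polynomial.evalRingHom w)) * Polynomial.C (ak.eval ((v₀ : ℝ) : ℂ))
        = (Q.map (Polynomial.evalRingHom ((v₀ : ℝ) : ℂ))) * Polynomial.C (ak.eval w) := by
      intro w
      ext i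
      rw [Polynomial.coeff_mul_C, Polynomial.coeff_mul_C, Polynomial.coeff_map,
        Polynomial.coeff_map]
      exact hprop i w ((v₀ : ℝ) : ℂ)
    -- bridge to real polynomials
    have hfC : Q.map (Polynomial.evalRingHom ((v₀ : ℝ) : ℂ)) = fR.map (algebraMap ℝ ℂ) := by
      ext i
      rw [Polynomial.coeff_map, Polynomial.coeff_map, hfRcoeff, QC_coeff]
      exact eval_map_real _ v₀
    have hreal : ∀ z w : ℝ, MvPolynomial.eval ![z, w] ξ * c₀ = fR.eval z * akR.eval w := by
      intro z w
      have h := congrArg (fun f => Polynomial.eval ((z : ℝ) : ℂ) f) (P1 ((w : ℝ) : ℂ))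
      simp only [Polynomial.eval_mul, Polynomial.eval_C] at h
      rw [← hpw, hfC] at h
      rw [hakRC] at h
      rw [eval_map_real akR v₀, eval_map_real akR w] at h
      have h2 : (fR.map (algebraMap ℝ ℂ)).eval ((z : ℝ) : ℂ) = ((fR.eval z : ℝ) : ℂ) :=
        eval_map_real fR z
      rw [h2, ev2_ofReal] at h
      exact_mod_cast h
    -- multivariate factorization
    have hfact : MvPolynomial.C c₀ * ξ
        = Polynomial.aeval (MvPolynomial.X 0) fR * Polynomial.aeval (MvPolynomial.X 1) akR := by
      apply MvPolynomial.funext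
      intro x
      have hx : x = ![x 0, x 1] := by
        funext i; fin_cases i <;> rfl
      rw [map_mul, map_mul, MvPolynomial.eval_C, eval_aevalX, eval_aevalX]
      rw [hx, mul_comm c₀ _]
      exact hreal (x 0) (x 1)
    have hprime : Prime ξ := UniqueFactorizationMonoid.irreducible_iff_prime.mp hirr
    have hdvd : ξ ∣ Polynomial.aeval (MvPolynomial.X 0) fR * Polynomial.aeval (MvPolynomial.X 1) akR := by
      refine ⟨MvPolynomial.C c₀, ?_⟩
      rw [← hfact]
      ring
    have hfR0 : fR ≠ 0 := by
      intro h
      apply hv₀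
      have hck : fR.coeff k = akR.eval v₀ := by rw [hfRcoeff k, hakR]
      rw [h, Polynomial.coeff_zero] at hck
      exact hck.symm
    rcases hprime.2.2 _ _ hdvd with hcase | hcase
    · obtain ⟨g, hg⟩ := hcase
      have hFm0 : Polynomial.aeval (MvPolynomial.X 0 : MvPolynomial (Fin 2) ℝ) fR ≠ 0 := by
        intro h
        obtain ⟨z1, hz1⟩ := ((Polynomial.finite_setOf_isRoot hfR0).infinite_compl).nonempty
        have := congrArg (MvPolynomial.eval ![z1, 0]) h
        rw [eval_aevalX] at this
        simp only [Matrix.cons_val_zero, map_zero] at this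
        exact hz1 this
      have hgne : g ≠ 0 := by
        intro h
        rw [h, mul_zero] at hg
        exact hFm0 hg
      have hdeg := hg ▸ deg1_mul hξ0 hgne
      have hzero := deg1_aevalX0 fR
      omega
    · obtain ⟨g, hg⟩ := hcase
      have hGm0 : Polynomial.aeval (MvPolynomial.X 1 : MvPolynomial (Fin 2) ℝ) akR ≠ 0 := by
        intro h
        obtain ⟨w1, hw1⟩ := ((Polynomial.finite_setOf_isRoot hakR0).infinite_compl).nonempty
        have := congrArg (MvPolynomial.eval ![0, w1]) h
        rw [eval_aevalX] at this
        simp only [Matrix.cons_val_one, Matrix.head_cons, map_zero] at this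
        exact hw1 this
      have hgne : g ≠ 0 := by
        intro h
        rw [h, mul_zero] at hg
        exact hGm0 hg
      have hdeg := hg ▸ deg0_mul hξ0 hgne
      have hzero := deg0_aevalX1 akR
      omega

end
end
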